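/- arXiv:2206.07892 — 5 statements merged into one kernel-verified Lean document; each statement's English description precedes it below -/
import Mathlib

section
/- Fix a unit vector μ ∈ ℝ^d and σ > 0, and let (x,y) ∼ D_{μ,σ,d}. Let w ∈ ℝ^d, and write w = u + v where u = (μᵀw)μ and v = w − u. Assume μᵀw ≥ 0 and v ≠ 0, and let q := (uᵀμ)/‖v‖₂ = μᵀw/‖v‖₂. Then Pr_{(x,y)∼D_{μ,σ,d}}[ |vᵀx| ≥ y·(uᵀx) ] ≤ 2e^{−q²/(8σ²)} + e^{−d/8}. -/
open MeasureTheory Real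
open scoped RealInnerProductSpace ENNReal NNReal

noncomputable section

/-- Euclidean space ℝ^d. -/
abbrev Euc (d : ℕ) : Type := EuclideanSpace ℝ (Fin d)

/-- The uniform probability measure on the unit sphere of `ℝ^k`, viewed as a
measure on `ℝ^k`. -/
noncomputable def unitSphereUniform (k : ℕ) : Measure (Euc k) :=
  ((volume : Measure (Euc k)).toSphere Set.univ)⁻¹ •
    Measure.map Subtype.val ((volume : Measure (Euc k)).toSphere)

/-- The uniform probability measure on the sphere of radius `r` inside the
subspace `K` of `ℝ^d`, viewed as a measure on `ℝ^d`. -/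
noncomputable def subSphereUniform {d : ℕ} (K : Submodule ℝ (Euc d)) (r : ℝ) :
    Measure (Euc d) :=
  Measure.map (fun z => r • (((stdOrthonormalBasis ℝ K).repr.symm z : K) : Euc d))
    (unitSphereUniform (Module.finrank ℝ K))

/-- The uniform distribution on `{1, -1} ⊆ ℝ`. -/
noncomputable def signUniform : Measure ℝ :=
  ((2 : ℝ≥0)⁻¹ : ℝ≥0) • (Measure.dirac (1 : ℝ) + Measure.dirac (-1 : ℝ))

/-- The linear data distribution `D_{μ,σ,d}` on `ℝ^d × ℝ`:  `y` uniform on `{±1}`,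
`ξ` uniform on the sphere of radius `√(d-1)·σ` in the hyperplane orthogonal to `μ`,
and `x = y•μ + ξ`. -/
noncomputable def linearDist (d : ℕ) (μ : Euc d) (σ : ℝ) : Measure (Euc d × ℝ) :=
  Measure.map (fun p : ℝ × Euc d => (p.1 • μ + p.2, p.1))
    (signUniform.prod
      (subSphereUniform (Submodule.span ℝ {μ})ᗮ (Real.sqrt ((d : ℝ) - 1) * σ)))

/-- The uniform distribution on `{μ₁, -μ₁, μ₂, -μ₂}`. -/
noncomputable def fourUniform {d : ℕ} (μ₁ μ₂ : Euc d) : Measure (Euc d) :=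
  ((4 : ℝ≥0)⁻¹ : ℝ≥0) •
    (Measure.dirac μ₁ + Measure.dirac (-μ₁) + Measure.dirac μ₂ + Measure.dirac (-μ₂))

/-- The XOR data distribution `D_{μ₁,μ₂,σ,d}` on `ℝ^d × ℝ`: `z` uniform on
`{±μ₁, ±μ₂}`, `ξ` uniform on the sphere of radius `√(d-2)·σ` in the subspace
orthogonal to `μ₁, μ₂`, `x = z + ξ`, and `y = ⟪μ₁,x⟫² - ⟪μ₂,x⟫²`. -/
noncomputable def xorDist (d : ℕ) (μ₁ μ₂ : Euc d) (σ : ℝ) : Measure (Euc d × ℝ) :=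
  Measure.map (fun p : Euc d × Euc d =>
      (p.1 + p.2, ⟪μ₁, p.1 + p.2⟫ ^ 2 - ⟪μ₂, p.1 + p.2⟫ ^ 2))
    ((fourUniform μ₁ μ₂).prod
      (subSphereUniform (Submodule.span ℝ {μ₁, μ₂})ᗮ (Real.sqrt ((d : ℝ) - 2) * σ)))

/-- The distribution of an i.i.d. sample of size `n` from `D`. -/
noncomputable def iid {α : Type*} [MeasurableSpace α] (n : ℕ) (D : Measure α) :
    Measure (Fin n → α) :=
  Measure.pi fun _ => D

/-- "With probability at least `p` over `s ∼ μ`, `Φ s` holds". -/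
def withProb {α : Type*} [MeasurableSpace α] (μ : Measure α) (p : ℝ) (Φ : α → Prop) : Prop :=
  ∃ E : Set α, MeasurableSet E ∧ ENNReal.ofReal p ≤ μ E ∧ ∀ s ∈ E, Φ s

/-- 0/1 test loss of a classifier `g` under distribution `D`. -/
noncomputable def testLoss {d : ℕ} (D : Measure (Euc d × ℝ)) (g : Euc d → ℝ) : ℝ :=
  (D {p | p.2 * g p.1 ≤ 0}).toReal

/-- Empirical 0/1 loss on a sample `S`. -/
noncomputable def empLoss {d : ℕ} (n : ℕ) (S : Fin n → Euc d × ℝ) (g : Euc d → ℝ) : ℝ :=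
  ((Finset.univ.filter fun j => (S j).2 * g ((S j).1) ≤ 0).card : ℝ) / n

/-- Margin of classifier `g` on the sample `S`: `min_j y_j g(x_j)`. -/
noncomputable def margin {d : ℕ} (n : ℕ) (g : Euc d → ℝ) (S : Fin n → Euc d × ℝ) : ℝ :=
  ⨅ j : Fin n, (S j).2 * g ((S j).1)

/-- Max margin over unit-norm linear classifiers. -/
noncomputable def linMaxMargin {d : ℕ} (n : ℕ) (S : Fin n → Euc d × ℝ) : ℝ :=
  ⨆ w : {w : Euc d // ‖w‖ ≤ 1}, margin n (fun x => ⟪(w : Euc d), x⟫) S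

/-- The activation `φ(z) = max(0,z)^h`. -/
noncomputable def phi (h z : ℝ) : ℝ := max 0 z ^ h

/-- Two-layer network `f_W(x) = (1/m) ∑ i, a i * φ(⟪w_i, x⟫)`. -/
noncomputable def netFun {d : ℕ} (h : ℝ) (m : ℕ) (a : Fin m → ℝ) (W : Fin m → Euc d)
    (x : Euc d) : ℝ :=
  (∑ i, a i * phi h ⟪W i, x⟫) / m

/-- Norm of a weight matrix: `√((1/m) ∑ i ‖w_i‖²)`. -/
noncomputable def wnorm {d : ℕ} (m : ℕ) (W : Fin m → Euc d) : ℝ :=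
  Real.sqrt ((∑ i, ‖W i‖ ^ 2) / m)

/-- Max margin over weight matrices of norm at most 1. -/
noncomputable def xorMaxMargin {d : ℕ} (h : ℝ) (m n : ℕ) (a : Fin m → ℝ)
    (S : Fin n → Euc d × ℝ) : ℝ :=
  ⨆ W : {W : Fin m → Euc d // wnorm m W ≤ 1},
    margin n (netFun h m a (W : Fin m → Euc d)) S

/-- `κ` is the threshold `κ_gen^{XOR,h}`: the positive solution of
`2^{1/h}·√(2/κ) = √(κ/(4+κ)) + √(16/(κ(4+κ)))`. -/
def IsKappaGen (h κ : ℝ) : Prop :=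
  0 < κ ∧ (2 : ℝ) ^ (1 / h) * Real.sqrt (2 / κ) =
    Real.sqrt (κ / (4 + κ)) + Real.sqrt (16 / (κ * (4 + κ)))

/-- ℓ₂ operator norm of a square matrix. -/
noncomputable def matOpNorm {n : ℕ} (M : Matrix (Fin n) (Fin n) ℝ) : ℝ :=
  ‖(Matrix.toEuclideanCLM (𝕜 := ℝ) M : EuclideanSpace ℝ (Fin n) →L[ℝ] EuclideanSpace ℝ (Fin n))‖

/-- Gram matrix of a family of vectors. -/
noncomputable def gram {d n : ℕ} (Ξ : Fin n → Euc d) : Matrix (Fin n) (Fin n) ℝ :=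
  Matrix.of fun i j => ⟪Ξ i, Ξ j⟫

end

section AuxStmt8
open Set Metric
open scoped Pointwise

lemma sqrt_le_exp_aux (t : ℝ) : Real.sqrt (1 - 3*t^2/4) ≤ Real.exp (-t^2/8) := by
  have h2 : 1 - 3*t^2/4 ≤ Real.exp (-t^2/8) ^ 2 := by
    have := Real.add_one_le_exp (-t^2/4)
    have h3 : Real.exp (-t^2/8) ^ 2 = Real.exp (-t^2/4) := by
      rw [← Real.exp_nat_mul]; norm_num; ring_nf
    nlinarith [sq_nonneg t]
  calc Real.sqrt (1 - 3*t^2/4) ≤ Real.sqrt (Real.exp (-t^2/8) ^ 2) := Real.sqrt_le_sqrt h2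
    _ = Real.exp (-t^2/8) := Real.sqrt_sq (Real.exp_nonneg _)

lemma capBound (k : ℕ) (hk : 0 < k) (e : Euc k) (he : ‖e‖ = 1) (t : ℝ) (ht : 0 ≤ t) :
    unitSphereUniform k {z | t ≤ |⟪e, z⟫|} ≤ ENNReal.ofReal (2 * Real.exp (-(k:ℝ) * t^2 / 8)) := by
  set A : Set (Euc k) := {z | t ≤ |⟪e, z⟫|} with hA_def
  have hA : MeasurableSet A :=
    measurableSet_le measurable_const ((continuous_const.inner continuous_id).abs.measurable)
  set R : ℝ := Real.sqrt (1 - 3*t^2/4) with hR_def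
  have hdim : Module.finrank ℝ (Euc k) = k := finrank_euclideanSpace_fin
  -- inclusion
  have hincl : Set.Ioo (0:ℝ) 1 • (A ∩ sphere (0 : Euc k) 1) ⊆
      closedBall ((t/2) • e) R ∪ closedBall (-((t/2) • e)) R := by
    rintro x hx
    rw [Set.mem_smul] at hx
    obtain ⟨s, hs, z, hz, rfl⟩ := hx
    obtain ⟨hzA, hzS⟩ := hz
    rw [mem_sphere_zero_iff_norm] at hzS
    replace hzA : t ≤ |⟪e, z⟫| := hzA
    have hiz : |⟪e, z⟫| ≤ 1 := by
      calc |⟪e, z⟫| ≤ ‖e‖ * ‖z‖ := abs_real_inner_le_norm e z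
        _ = 1 := by rw [he, hzS]; ring
    have ht1 : t ≤ 1 := le_trans hzA hiz
    have hs0 : 0 < s := hs.1
    have hs1 : s < 1 := hs.2
    have hRsq : R ^ 2 = 1 - 3*t^2/4 := Real.sq_sqrt (by nlinarith)
    have key : ∀ c : Euc k, ‖c‖^2 = t^2/4 → ⟪s • z, c⟫ ≥ s * t * t / 2 →
        s • z ∈ closedBall c R := by
      intro c hc hin
      rw [mem_closedBall, dist_eq_norm]
      have hnormsq : ‖s • z - c‖^2 = ‖s • z‖^2 - 2 * ⟪s • z, c⟫ + ‖c‖^2 :=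
        norm_sub_sq_real _ _
      have hsz : ‖s • z‖^2 = s^2 := by
        rw [norm_smul, hzS, mul_one, Real.norm_eq_abs, abs_of_pos hs0]
      have hq1 : 0 ≤ (1-s)*(1+s-t^2) :=
        mul_nonneg (by linarith) (by nlinarith)
      have : ‖s • z - c‖^2 ≤ 1 - 3*t^2/4 := by
        rw [hnormsq, hsz, hc]; nlinarith [hin, hq1]
      calc ‖s • z - c‖ = Real.sqrt (‖s • z - c‖^2) := (Real.sqrt_sq (norm_nonneg _)).symm
        _ ≤ R := Real.sqrt_le_sqrt this
    rcases le_or_gt 0 ⟪e, z⟫ with hpos | hneg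
    · left
      apply key
      · rw [norm_smul, he, mul_one, Real.norm_eq_abs, abs_of_nonneg (by linarith : (0:ℝ) ≤ t/2)]; ring
      · have : ⟪s • z, (t/2) • e⟫ = s * (t/2) * ⟪e, z⟫ := by
          rw [real_inner_smul_left, real_inner_smul_right, real_inner_comm]; ring
        rw [this]
        have h2 : t ≤ ⟪e, z⟫ := by rwa [abs_of_nonneg hpos] at hzA
        nlinarith [mul_nonneg (mul_nonneg hs0.le ht) (sub_nonneg.2 h2)]
    · right
      apply key
      · rw [norm_neg, norm_smul, he, mul_one, Real.norm_eq_abs, abs_of_nonneg (by linarith : (0:ℝ) ≤ t/2)]; ring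
      · have h1 : ⟪s • z, -((t/2) • e)⟫ = -(s * (t/2) * ⟪e, z⟫) := by
          rw [inner_neg_right, real_inner_smul_left, real_inner_smul_right, real_inner_comm]; ring
        rw [h1]
        have h2 : t ≤ -⟪e, z⟫ := by rwa [abs_of_neg hneg] at hzA
        nlinarith [mul_nonneg (mul_nonneg hs0.le ht) (sub_nonneg.2 h2)]
  have hvol : volume (Set.Ioo (0:ℝ) 1 • (A ∩ sphere (0 : Euc k) 1)) ≤
      2 * ENNReal.ofReal (R ^ k) * volume (ball (0 : Euc k) 1) := by
    calc volume (Set.Ioo (0:ℝ) 1 • (A ∩ sphere (0 : Euc k) 1))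
        ≤ volume (closedBall ((t/2) • e) R ∪ closedBall (-((t/2) • e)) R) := measure_mono hincl
      _ ≤ volume (closedBall ((t/2) • e) R) + volume (closedBall (-((t/2) • e)) R) :=
          measure_union_le _ _
      _ = 2 * ENNReal.ofReal (R ^ k) * volume (ball (0 : Euc k) 1) := by
          rw [Measure.addHaar_closedBall _ _ (Real.sqrt_nonneg _),
            Measure.addHaar_closedBall _ _ (Real.sqrt_nonneg _), hdim]
          ring
  have hmap : unitSphereUniform k A = ((volume : Measure (Euc k)).toSphere Set.univ)⁻¹ *
      ((volume : Measure (Euc k)).toSphere (Subtype.val ⁻¹' A)) := by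
    rw [unitSphereUniform, Measure.smul_apply, Measure.map_apply measurable_subtype_coe hA,
      smul_eq_mul]
  have himg : (Subtype.val '' (Subtype.val ⁻¹' A : Set (sphere (0 : Euc k) 1))) = A ∩ sphere (0 : Euc k) 1 := by
    rw [Subtype.image_preimage_coe, Set.inter_comm]
  rw [hmap, Measure.toSphere_apply' _ (measurable_subtype_coe hA),
    Measure.toSphere_apply_univ, hdim, himg]
  set B := volume (ball (0 : Euc k) 1) with hB
  have hB0 : B ≠ 0 := (measure_ball_pos _ _ one_pos).ne'
  have hBT : B ≠ ⊤ := measure_ball_lt_top.ne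
  have hk0 : (k : ℝ≥0∞) ≠ 0 := Nat.cast_ne_zero.2 hk.ne'
  have hkB0 : (k : ℝ≥0∞) * B ≠ 0 := mul_ne_zero hk0 hB0
  have hkBT : (k : ℝ≥0∞) * B ≠ ⊤ := ENNReal.mul_ne_top (ENNReal.natCast_ne_top k) hBT
  have hRk : R ^ k ≤ Real.exp (-(k:ℝ) * t^2/8) := by
    calc R ^ k ≤ Real.exp (-t^2/8) ^ k := pow_le_pow_left₀ (Real.sqrt_nonneg _) (sqrt_le_exp_aux t) k
      _ = Real.exp (-(k:ℝ) * t^2/8) := by rw [← Real.exp_nat_mul]; ring_nf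
  calc ((k : ℝ≥0∞) * B)⁻¹ * ((k : ℝ≥0∞) * volume (Set.Ioo (0:ℝ) 1 • (A ∩ sphere (0 : Euc k) 1)))
      ≤ ((k : ℝ≥0∞) * B)⁻¹ * ((k : ℝ≥0∞) * (2 * ENNReal.ofReal (R ^ k) * B)) := by gcongr
    _ = (((k : ℝ≥0∞) * B)⁻¹ * ((k : ℝ≥0∞) * B)) * (2 * ENNReal.ofReal (R ^ k)) := by ring
    _ = 2 * ENNReal.ofReal (R ^ k) := by rw [ENNReal.inv_mul_cancel hkB0 hkBT, one_mul]
    _ = ENNReal.ofReal (2 * R ^ k) := by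
        rw [ENNReal.ofReal_mul (by norm_num : (0:ℝ) ≤ 2), ENNReal.ofReal_ofNat]
    _ ≤ ENNReal.ofReal (2 * Real.exp (-(k:ℝ) * t^2 / 8)) :=
        ENNReal.ofReal_le_ofReal (by linarith)

lemma unitSphereUniform_zero : unitSphereUniform 0 = 0 := by
  have he : IsEmpty (sphere (0 : Euc 0) 1) := by
    constructor
    rintro ⟨x, hx⟩
    rw [mem_sphere_zero_iff_norm, Subsingleton.elim x 0, norm_zero] at hx
    norm_num at hx
  rw [unitSphereUniform, Measure.eq_zero_of_isEmpty ((volume : Measure (Euc 0)).toSphere),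
    Measure.map_zero, smul_zero]

lemma subSphereUniform_eq_zero {d : ℕ} (K : Submodule ℝ (Euc d)) (r : ℝ)
    (h : Module.finrank ℝ K = 0) : subSphereUniform K r = 0 := by
  unfold subSphereUniform
  have h2 : unitSphereUniform (Module.finrank ℝ K) = 0 := by rw [h]; exact unitSphereUniform_zero
  rw [h2, Measure.map_zero]

end AuxStmt8

set_option maxHeartbeats 1000000 in
/-- **The overfitting component only slightly affects a test point (linear).**
For `w = u + v` with `u = (μᵀw)μ` the signal component and `v ⊥ μ` the
orthogonal component, `μᵀw ≥ 0`, `v ≠ 0`, and `q = μᵀw/‖v‖`, a fresh sample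
`(x,y) ∼ D_{μ,σ,d}` satisfies `|vᵀx| ≥ y·(uᵀx)` with probability at most
`2e^{-q²/(8σ²)} + e^{-d/8}`. -/
theorem stmt8 (d : ℕ) (hd : 0 < d) (μ : Euc d) (σ : ℝ) (hμ : ‖μ‖ = 1) (hσ : 0 < σ)
    (w u v : Euc d) (hu : u = ⟪μ, w⟫ • μ) (hv : v = w - u)
    (hpos : 0 ≤ ⟪μ, w⟫) (hvne : v ≠ 0) (q : ℝ) (hq : q = ⟪μ, w⟫ / ‖v‖) :
    linearDist d μ σ {p | |⟪v, p.1⟫| ≥ p.2 * ⟪u, p.1⟫} ≤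
      ENNReal.ofReal (2 * Real.exp (-q ^ 2 / (8 * σ ^ 2)) + Real.exp (-(d : ℝ) / 8)) := by
  classical
  have hμ0 : μ ≠ 0 := by intro h; rw [h, norm_zero] at hμ; norm_num at hμ
  set K : Submodule ℝ (Euc d) := (Submodule.span ℝ ({μ} : Set (Euc d)))ᗮ with hK
  have hfin : Module.finrank ℝ (Submodule.span ℝ ({μ} : Set (Euc d))) = 1 :=
    finrank_span_singleton hμ0
  have hsum := Submodule.finrank_add_finrank_orthogonal
    (K := Submodule.span ℝ ({μ} : Set (Euc d)))
  rw [hfin, finrank_euclideanSpace_fin, ← hK] at hsum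
  have hkK : Module.finrank ℝ K = d - 1 := by omega
  -- measurability of the event and the map
  have hE : MeasurableSet {p : Euc d × ℝ | |⟪v, p.1⟫| ≥ p.2 * ⟪u, p.1⟫} := by
    apply measurableSet_le
    · exact (measurable_snd.mul ((continuous_const.inner continuous_fst).measurable))
    · exact ((continuous_const.inner continuous_fst).abs.measurable)
  have hF : Measurable (fun p : ℝ × Euc d => (p.1 • μ + p.2, p.1)) := by fun_prop
  rw [linearDist, Measure.map_apply hF hE]
  set S : Set (ℝ × Euc d) := (fun p : ℝ × Euc d => (p.1 • μ + p.2, p.1)) ⁻¹'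
    {p : Euc d × ℝ | |⟪v, p.1⟫| ≥ p.2 * ⟪u, p.1⟫} with hS
  have hSm : MeasurableSet S := hF hE
  by_cases hd1 : d = 1
  · -- degenerate case
    subst hd1
    rw [subSphereUniform_eq_zero _ _ (by rw [hkK]), Measure.prod_zero]
    simp
  -- main case : d ≥ 2
  have hd2 : 2 ≤ d := by omega
  have hd1R : (1:ℝ) ≤ (d:ℝ) - 1 := by
    have h2 : (2:ℝ) ≤ (d:ℝ) := by exact_mod_cast hd2
    linarith
  set r : ℝ := Real.sqrt ((d : ℝ) - 1) * σ with hr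
  have hrpos : 0 < r := mul_pos (Real.sqrt_pos.2 (by linarith)) hσ
  have hμμ : ⟪μ, μ⟫ = 1 := by
    rw [real_inner_self_eq_norm_sq, hμ]; norm_num
  have hμv : ⟪μ, v⟫ = 0 := by
    rw [hv, hu, inner_sub_right, real_inner_smul_right, hμμ]; ring
  have hvμ : ⟪v, μ⟫ = 0 := by rw [real_inner_comm]; exact hμv
  have hvK : v ∈ K := by
    rw [hK]
    exact Submodule.mem_orthogonal_singleton_iff_inner_right.2 hμv
  have hkpos : 0 < Module.finrank ℝ K := by omega
  set T := (stdOrthonormalBasis ℝ K).repr.symm with hT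
  set v0 : Euc (Module.finrank ℝ K) := (stdOrthonormalBasis ℝ K).repr ⟨v, hvK⟩ with hv0
  have hvnpos : 0 < ‖v‖ := norm_pos_iff.2 hvne
  have hv0n : ‖v0‖ = ‖v‖ := by
    rw [hv0, LinearIsometryEquiv.norm_map]
    rfl
  set e : Euc (Module.finrank ℝ K) := ‖v‖⁻¹ • v0 with he_def
  have he : ‖e‖ = 1 := by
    rw [he_def, norm_smul, hv0n, norm_inv, Real.norm_eq_abs, abs_of_pos hvnpos,
      inv_mul_cancel₀ hvnpos.ne']
  set t : ℝ := ⟪μ, w⟫ / (r * ‖v‖) with htdef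
  have ht : 0 ≤ t := div_nonneg hpos (by positivity)
  set G : Euc (Module.finrank ℝ K) → Euc d := fun z => r • (((T z : K) : Euc d)) with hG_def
  have hG : Measurable G := by
    apply Continuous.measurable
    exact (continuous_subtype_val.comp T.continuous).const_smul r
  -- inner product computations
  have hinner1 : ∀ z, ⟪μ, ((T z : K) : Euc d)⟫ = 0 := by
    intro z
    exact Submodule.mem_orthogonal_singleton_iff_inner_right.1 (T z).2
  have hinner2 : ∀ z, ⟪v, ((T z : K) : Euc d)⟫ = ‖v‖ * ⟪e, z⟫ := by
    intro z
    have h1 : ⟪v, ((T z : K) : Euc d)⟫ = ⟪(⟨v, hvK⟩ : K), T z⟫ := rfl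
    have h2 : ⟪(⟨v, hvK⟩ : K), T z⟫ =
        ⟪(stdOrthonormalBasis ℝ K).repr ⟨v, hvK⟩, (stdOrthonormalBasis ℝ K).repr (T z)⟫ :=
      ((stdOrthonormalBasis ℝ K).repr.inner_map_map _ _).symm
    rw [h1, h2, hT, LinearIsometryEquiv.apply_symm_apply, ← hv0, he_def,
      real_inner_smul_left]
    field_simp
  -- the sections of S
  have hsec : ∀ y : ℝ, y = 1 ∨ y = -1 →
      G ⁻¹' (Prod.mk y ⁻¹' S) = {z | t ≤ |⟪e, z⟫|} := by
    intro y hy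
    have hyy : y * y = 1 := by rcases hy with h | h <;> rw [h] <;> norm_num
    ext z
    simp only [hS, Set.mem_preimage, Set.mem_setOf_eq, hG_def]
    have c1 : ⟪v, y • μ + r • ((T z : K) : Euc d)⟫ = r * ‖v‖ * ⟪e, z⟫ := by
      rw [inner_add_right, real_inner_smul_right, real_inner_smul_right, hvμ, hinner2]
      ring
    have c2 : ⟪u, y • μ + r • ((T z : K) : Euc d)⟫ = y * ⟪μ, w⟫ := by
      rw [hu, real_inner_smul_left, inner_add_right, real_inner_smul_right,
        real_inner_smul_right, hμμ, hinner1]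
      ring
    rw [c1, c2]
    have habs : |r * ‖v‖ * ⟪e, z⟫| = r * ‖v‖ * |⟪e, z⟫| := by
      rw [abs_mul, abs_of_pos (by positivity : (0:ℝ) < r * ‖v‖)]
    have hyc : y * (y * ⟪μ, w⟫) = ⟪μ, w⟫ := by rw [← mul_assoc, hyy, one_mul]
    constructor
    · intro h
      rw [ge_iff_le, hyc, habs] at h
      rw [htdef, div_le_iff₀ (by positivity), mul_comm]
      exact h
    · intro h
      rw [htdef, div_le_iff₀ (by positivity), mul_comm] at h
      rw [ge_iff_le, hyc, habs]
      exact h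
  have hsec' : ∀ y : ℝ, y = 1 ∨ y = -1 →
      subSphereUniform K r (Prod.mk y ⁻¹' S) =
        unitSphereUniform (Module.finrank ℝ K) {z | t ≤ |⟪e, z⟫|} := by
    intro y hy
    rw [subSphereUniform, Measure.map_apply hG (measurable_prodMk_left hSm), hsec y hy]
  haveI : SFinite (subSphereUniform K r) := by
    unfold subSphereUniform unitSphereUniform; infer_instance
  have hprod : (signUniform.prod (subSphereUniform K r)) S =
      unitSphereUniform (Module.finrank ℝ K) {z | t ≤ |⟪e, z⟫|} := by
    rw [Measure.prod_apply hSm, signUniform]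
    rw [ENNReal.smul_def, lintegral_smul_measure, lintegral_add_measure, lintegral_dirac,
      lintegral_dirac, hsec' 1 (Or.inl rfl), hsec' (-1) (Or.inr rfl), ← two_mul, smul_eq_mul, ← mul_assoc]
    have h2 : (((2:ℝ≥0)⁻¹ : ℝ≥0) : ℝ≥0∞) * 2 = 1 := by
      rw [ENNReal.coe_inv (by norm_num), ENNReal.coe_two]
      exact ENNReal.inv_mul_cancel two_ne_zero ENNReal.ofNat_ne_top
    rw [h2, one_mul]
  rw [hprod]
  refine le_trans (capBound (Module.finrank ℝ K) hkpos e he t ht) ?_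
  have hne1 : (d:ℝ) - 1 ≠ 0 := by linarith
  have hne2 : σ ≠ 0 := hσ.ne'
  have hne3 : ‖v‖ ≠ 0 := hvnpos.ne'
  have hexp : -(Module.finrank ℝ K : ℝ) * t^2/8 = -q^2/(8*σ^2) := by
    have hkc : ((Module.finrank ℝ K : ℕ) : ℝ) = (d:ℝ) - 1 := by
      rw [hkK, Nat.cast_sub hd, Nat.cast_one]
    have hr2 : r^2 = ((d:ℝ)-1) * σ^2 := by
      rw [hr, mul_pow, Real.sq_sqrt (by linarith)]
    rw [hkc, htdef, hq, div_pow, div_pow, mul_pow, hr2]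
    field_simp
  rw [hexp]
  exact ENNReal.ofReal_le_ofReal (le_add_of_nonneg_right (Real.exp_nonneg _))
end

section
/- Let n, d be positive integers, σ > 0, δ ≥ 0, and let Ξ ∈ ℝ^{d×n} have columns ξ_1,…,ξ_n. Suppose ‖(1/(σ²d))·ΞᵀΞ − I_n‖₂ ≤ δ, where ‖·‖₂ is the spectral norm. Then for every v ∈ ℝ^d and every y ∈ {−1,1}ⁿ, min_{1 ≤ j ≤ n} y_j·vᵀξ_j ≤ ‖v‖₂·√(1+δ)/√κ, where κ := n/(dσ²). -/
open MeasureTheory Real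
open scoped RealInnerProductSpace ENNReal NNReal

/-- **Margin upper bound from Gram-matrix concentration.**
If `‖(1/(σ²d))ΞᵀΞ - I‖₂ ≤ δ`, then for every `v` and every sign vector `y`,
`min_j y_j vᵀξ_j ≤ ‖v‖·√(1+δ)/√κ` where `κ = n/(dσ²)`. -/
theorem stmt11 (n d : ℕ) (hn : 0 < n) (hd : 0 < d) (σ δ : ℝ) (hσ : 0 < σ)
    (hδ : 0 ≤ δ) (Ξ : Fin n → Euc d)
    (hΞ : matOpNorm ((σ ^ 2 * d)⁻¹ • gram Ξ - 1) ≤ δ)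
    (v : Euc d) (y : Fin n → ℝ) (hy : ∀ j, y j = 1 ∨ y j = -1) :
    (⨅ j : Fin n, y j * ⟪v, Ξ j⟫) ≤
      ‖v‖ * Real.sqrt (1 + δ) / Real.sqrt ((n : ℝ) / (d * σ ^ 2)) := by
  classical
  have hn' : (0 : ℝ) < n := Nat.cast_pos.mpr hn
  have hd' : (0 : ℝ) < d := Nat.cast_pos.mpr hd
  set c : ℝ := (σ ^ 2 * d)⁻¹ with hc
  have hcpos : 0 < c := by positivity
  set u : Euc d := ∑ j, y j • Ξ j with hu
  set Y : EuclideanSpace ℝ (Fin n) := (WithLp.equiv 2 (Fin n → ℝ)).symm y with hYdef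
  have hYapp : ∀ i, Y i = y i := fun i => rfl
  have hy2 : ∀ j, y j * y j = 1 := fun j => by rcases hy j with h | h <;> rw [h] <;> ring
  have hYin : ⟪Y, Y⟫ = (n : ℝ) := by
    simp only [PiLp.inner_apply, RCLike.inner_apply, starRingEnd_apply, star_trivial, hYapp]
    simp [hy2]
  have hYnorm : ‖Y‖ ^ 2 = (n : ℝ) := by
    rw [← real_inner_self_eq_norm_sq, hYin]
  -- Gram quadratic form equals ‖u‖²
  have hGinner : ⟪Y, (Matrix.toEuclideanCLM (𝕜 := ℝ) (gram Ξ)) Y⟫ = ⟪u, u⟫ := by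
    rw [hYdef, WithLp.equiv_symm_apply, Matrix.toEuclideanCLM_toLp]
    simp only [PiLp.inner_apply, RCLike.inner_apply, starRingEnd_apply, star_trivial,
      PiLp.toLp_apply, Matrix.toLin'_apply, Matrix.mulVec, dotProduct,
      gram, Matrix.of_apply, hu, inner_sum, sum_inner, real_inner_smul_left,
      real_inner_smul_right]
    simp only [PiLp.smul_apply, smul_eq_mul, Finset.sum_mul, Finset.mul_sum]
    rw [Finset.sum_comm]
    refine Finset.sum_congr rfl fun i _ => ?_
    refine Finset.sum_congr rfl fun j _ => ?_
    exact Finset.sum_congr rfl fun x _ => by ring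
  have hT : (Matrix.toEuclideanCLM (𝕜 := ℝ) (c • gram Ξ - 1)) =
      c • (Matrix.toEuclideanCLM (𝕜 := ℝ) (gram Ξ)) - 1 := by
    simp only [map_sub, _root_.map_smul, map_one]
  -- key bound on ‖u‖²
  have hkey : ⟪u, u⟫ ≤ (1 + δ) * (n * (σ ^ 2 * d)) := by
    have h1 : ⟪Y, (Matrix.toEuclideanCLM (𝕜 := ℝ) (c • gram Ξ - 1)) Y⟫ ≤ δ * (n : ℝ) := by
      calc ⟪Y, (Matrix.toEuclideanCLM (𝕜 := ℝ) (c • gram Ξ - 1)) Y⟫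
          ≤ ‖Y‖ * ‖(Matrix.toEuclideanCLM (𝕜 := ℝ) (c • gram Ξ - 1)) Y‖ :=
            real_inner_le_norm _ _
        _ ≤ ‖Y‖ * (matOpNorm (c • gram Ξ - 1) * ‖Y‖) := by
            exact mul_le_mul_of_nonneg_left
              ((Matrix.toEuclideanCLM (𝕜 := ℝ) (c • gram Ξ - 1)).le_opNorm Y)
              (norm_nonneg _)
        _ ≤ ‖Y‖ * (δ * ‖Y‖) := by
            have := mul_le_mul_of_nonneg_right hΞ (norm_nonneg Y)
            exact mul_le_mul_of_nonneg_left this (norm_nonneg _)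
        _ = δ * ‖Y‖ ^ 2 := by ring
        _ = δ * (n : ℝ) := by rw [hYnorm]
    have h2 : ⟪Y, (Matrix.toEuclideanCLM (𝕜 := ℝ) (c • gram Ξ - 1)) Y⟫ =
        c * ⟪u, u⟫ - (n : ℝ) := by
      rw [hT]
      have : (c • (Matrix.toEuclideanCLM (𝕜 := ℝ) (gram Ξ)) - 1) Y =
          c • ((Matrix.toEuclideanCLM (𝕜 := ℝ) (gram Ξ)) Y) - Y := by
        simp
      rw [this, inner_sub_right, real_inner_smul_right, hGinner, hYin]
    rw [h2] at h1
    have : c * ⟪u, u⟫ ≤ (1 + δ) * n := by linarith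
    have hc' : c⁻¹ = σ ^ 2 * d := by rw [hc, inv_inv]
    calc ⟪u, u⟫ = c⁻¹ * (c * ⟪u, u⟫) := by field_simp
      _ ≤ c⁻¹ * ((1 + δ) * n) := by
          exact mul_le_mul_of_nonneg_left this (le_of_lt (inv_pos.mpr hcpos))
      _ = (1 + δ) * (n * (σ ^ 2 * d)) := by rw [hc']; ring
  have hunorm : ‖u‖ ≤ Real.sqrt ((1 + δ) * (n * (σ ^ 2 * d))) := by
    rw [← Real.sqrt_sq (norm_nonneg u)]
    apply Real.sqrt_le_sqrt
    rw [← real_inner_self_eq_norm_sq]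
    exact hkey
  -- min ≤ average
  have hb : BddBelow (Set.range fun j : Fin n => y j * ⟪v, Ξ j⟫) :=
    Set.Finite.bddBelow (Set.finite_range _)
  have hmin : (n : ℝ) * (⨅ j : Fin n, y j * ⟪v, Ξ j⟫) ≤ ∑ j, y j * ⟪v, Ξ j⟫ := by
    have := Finset.card_nsmul_le_sum Finset.univ (fun j => y j * ⟪v, Ξ j⟫)
      (⨅ j : Fin n, y j * ⟪v, Ξ j⟫) (fun j _ => ciInf_le hb j)
    simpa [nsmul_eq_mul] using this
  have hsum : ∑ j, y j * ⟪v, Ξ j⟫ = ⟪v, u⟫ := by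
    rw [hu, inner_sum]
    exact Finset.sum_congr rfl fun j _ => (real_inner_smul_right v (Ξ j) (y j)).symm
  have hCS : ⟪v, u⟫ ≤ ‖v‖ * ‖u‖ := real_inner_le_norm v u
  have hstep : (⨅ j : Fin n, y j * ⟪v, Ξ j⟫) ≤
      ‖v‖ * Real.sqrt ((1 + δ) * (n * (σ ^ 2 * d))) / n := by
    rw [le_div_iff₀ hn', mul_comm _ (n : ℝ)]
    calc (n : ℝ) * (⨅ j : Fin n, y j * ⟪v, Ξ j⟫) ≤ ∑ j, y j * ⟪v, Ξ j⟫ := hmin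
      _ = ⟪v, u⟫ := hsum
      _ ≤ ‖v‖ * ‖u‖ := hCS
      _ ≤ ‖v‖ * Real.sqrt ((1 + δ) * (n * (σ ^ 2 * d))) :=
          mul_le_mul_of_nonneg_left hunorm (norm_nonneg v)
  refine hstep.trans (le_of_eq ?_)
  have h1δ : (0 : ℝ) ≤ 1 + δ := by linarith
  have hsn : Real.sqrt n * Real.sqrt n = (n : ℝ) := Real.mul_self_sqrt hn'.le
  have hsnpos : 0 < Real.sqrt n := Real.sqrt_pos.mpr hn'
  rw [Real.sqrt_div hn'.le, Real.sqrt_mul h1δ, Real.sqrt_mul hn'.le]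
  have hds : (d : ℝ) * σ ^ 2 = σ ^ 2 * d := by ring
  rw [hds]
  rw [div_div_eq_mul_div, div_eq_div_iff hn'.ne' hsnpos.ne']
  linear_combination (‖v‖ * Real.sqrt (1 + δ) * Real.sqrt (σ ^ 2 * ↑d)) * hsn
end

section
/- Let n, d be positive integers, σ > 0, let μ ∈ ℝ^d be a unit vector, let y ∈ {−1,1}ⁿ, and let Ξ ∈ ℝ^{d×n} be a matrix whose columns are all orthogonal to μ. Let δ ∈ [0, 1/2] and suppose ‖(1/(σ²d))·ΞᵀΞ − I_n‖₂ ≤ δ, where ‖·‖₂ is the spectral norm. Set X := μyᵀ + Ξ ∈ ℝ^{d×n}. Then for every a ∈ ℝⁿ, with w := Xa and ŷ := Xᵀw ∈ ℝⁿ, we have μᵀw ≥ (yᵀŷ − 2δ·σ·√d·‖y‖₂·‖w‖₂)/(σ²d + ‖y‖₂²). -/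
open MeasureTheory Real
open scoped RealInnerProductSpace ENNReal NNReal

lemma inner_mulVec_abs_le {n : ℕ} (M : Matrix (Fin n) (Fin n) ℝ) (u v : Fin n → ℝ) :
    |∑ i, u i * M.mulVec v i| ≤
      matOpNorm M * ‖(WithLp.equiv 2 (Fin n → ℝ)).symm u‖ *
        ‖(WithLp.equiv 2 (Fin n → ℝ)).symm v‖ := by
  set ue : EuclideanSpace ℝ (Fin n) := (WithLp.equiv 2 (Fin n → ℝ)).symm u with hue
  set ve : EuclideanSpace ℝ (Fin n) := (WithLp.equiv 2 (Fin n → ℝ)).symm v with hve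
  have h2 : ∀ i, ((Matrix.toEuclideanCLM (𝕜 := ℝ) M) ve) i = M.mulVec v i := by
    intro i
    have := congrFun (Matrix.ofLp_toEuclideanCLM (𝕜 := ℝ) M ve) i
    simpa [Matrix.toLin'_apply, hve] using this
  have h1 : ∑ i, u i * M.mulVec v i = ⟪ue, (Matrix.toEuclideanCLM (𝕜 := ℝ) M) ve⟫ := by
    rw [PiLp.inner_apply]
    refine Finset.sum_congr rfl fun i _ => ?_
    rw [h2 i]
    simp [hue, RCLike.inner_apply, mul_comm]
  rw [h1]
  calc |⟪ue, (Matrix.toEuclideanCLM (𝕜 := ℝ) M) ve⟫|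
      ≤ ‖ue‖ * ‖(Matrix.toEuclideanCLM (𝕜 := ℝ) M) ve‖ := abs_real_inner_le_norm _ _
    _ ≤ ‖ue‖ * (matOpNorm M * ‖ve‖) :=
        mul_le_mul_of_nonneg_left (ContinuousLinearMap.le_opNorm _ _) (norm_nonneg _)
    _ = matOpNorm M * ‖ue‖ * ‖ve‖ := by ring

set_option maxHeartbeats 1000000 in
/-- **Signal correlation of vectors in the span of the data.**
Let `X = μyᵀ + Ξ` where the columns of `Ξ` are orthogonal to the unit vector
`μ` and `‖(1/(σ²d))ΞᵀΞ - I‖₂ ≤ δ ≤ 1/2`. Then for every coefficient vector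
`a`, with `w = Xa` and `ŷ = Xᵀw`,
`μᵀw ≥ (yᵀŷ - 2δσ√d‖y‖‖w‖)/(σ²d + ‖y‖²)`. -/
theorem stmt13 (n d : ℕ) (hn : 0 < n) (hd : 0 < d) (σ : ℝ) (hσ : 0 < σ)
    (μ : Euc d) (hμ : ‖μ‖ = 1) (y : Fin n → ℝ) (hy : ∀ j, y j = 1 ∨ y j = -1)
    (Ξ : Fin n → Euc d) (hperp : ∀ j, ⟪μ, Ξ j⟫ = 0)
    (δ : ℝ) (hδ0 : 0 ≤ δ) (hδ1 : δ ≤ 1 / 2)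
    (hop : matOpNorm ((σ ^ 2 * d)⁻¹ • gram Ξ - 1) ≤ δ)
    (a : Fin n → ℝ) (X : Fin n → Euc d) (w : Euc d) (yhat : Fin n → ℝ)
    (hX : ∀ j, X j = y j • μ + Ξ j)
    (hw : w = ∑ j, a j • X j)
    (hyhat : ∀ j, yhat j = ⟪X j, w⟫) :
    ⟪μ, w⟫ ≥ ((∑ j, y j * yhat j) -
        2 * δ * σ * Real.sqrt d * Real.sqrt (∑ j, y j ^ 2) * ‖w‖) /
      (σ ^ 2 * d + ∑ j, y j ^ 2) := by
  classical
  have hdR : (0 : ℝ) < d := by exact_mod_cast hd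
  set c : ℝ := σ ^ 2 * d with hcdef
  have hc : 0 < c := by positivity
  set E : Matrix (Fin n) (Fin n) ℝ := c⁻¹ • gram Ξ - 1 with hEdef
  set v : Euc d := ∑ j, a j • Ξ j with hvdef
  set s : ℝ := ∑ j, a j * y j with hsdef
  have hperp' : ∀ j, ⟪Ξ j, μ⟫ = 0 := fun j => by
    rw [real_inner_comm]; exact hperp j
  have hμμ : ⟪μ, μ⟫ = 1 := by
    rw [real_inner_self_eq_norm_sq, hμ]; norm_num
  have hμv : ⟪μ, v⟫ = 0 := by
    rw [hvdef, inner_sum]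
    simp only [real_inner_smul_right, hperp, mul_zero, Finset.sum_const_zero]
  have hw2 : w = s • μ + v := by
    rw [hw, hvdef, hsdef, Finset.sum_smul, ← Finset.sum_add_distrib]
    refine Finset.sum_congr rfl fun j _ => ?_
    rw [hX j, smul_add, smul_smul]
  have hμw : ⟪μ, w⟫ = s := by
    rw [hw2, inner_add_right, real_inner_smul_right, hμμ, hμv]; ring
  have hΞw : ∀ i, ⟪Ξ i, w⟫ = ⟪Ξ i, v⟫ := fun i => by
    rw [hw2, inner_add_right, real_inner_smul_right, hperp' i]; ring
  have hgram : ∀ i, (gram Ξ).mulVec a i = ⟪Ξ i, v⟫ := by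
    intro i
    rw [hvdef, inner_sum]
    simp only [Matrix.mulVec, dotProduct, gram, Matrix.of_apply,
      real_inner_smul_right]
    exact Finset.sum_congr rfl fun j _ => mul_comm _ _
  have hEa : ∀ i, (gram Ξ).mulVec a i = c * (a i + E.mulVec a i) := by
    intro i
    rw [hEdef]
    simp only [Matrix.sub_mulVec, Matrix.smul_mulVec, Matrix.one_mulVec,
      Pi.sub_apply, Pi.smul_apply, smul_eq_mul]
    field_simp
    ring
  set t : ℝ := ∑ i, y i * E.mulVec a i with htdef
  set q : ℝ := ∑ i, a i * E.mulVec a i with hqdef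
  set ye : EuclideanSpace ℝ (Fin n) := (WithLp.equiv 2 (Fin n → ℝ)).symm y with hyedef
  set ae : EuclideanSpace ℝ (Fin n) := (WithLp.equiv 2 (Fin n → ℝ)).symm a with haedef
  have hyenorm : ‖ye‖ = Real.sqrt (∑ j, y j ^ 2) := by
    rw [EuclideanSpace.norm_eq]
    congr 1
    refine Finset.sum_congr rfl fun j _ => ?_
    simp [hyedef, Real.norm_eq_abs, sq_abs]
  have haenorm2 : ‖ae‖ ^ 2 = ∑ j, a j ^ 2 := by
    rw [← real_inner_self_eq_norm_sq, PiLp.inner_apply]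
    refine Finset.sum_congr rfl fun j _ => ?_
    simp [haedef, sq]
  have ht : |t| ≤ δ * (‖ye‖ * ‖ae‖) := by
    calc |t| ≤ matOpNorm E * ‖ye‖ * ‖ae‖ := inner_mulVec_abs_le E y a
      _ ≤ δ * ‖ye‖ * ‖ae‖ := by gcongr
      _ = δ * (‖ye‖ * ‖ae‖) := by ring
  have hq : |q| ≤ δ * ‖ae‖ ^ 2 := by
    calc |q| ≤ matOpNorm E * ‖ae‖ * ‖ae‖ := inner_mulVec_abs_le E a a
      _ ≤ δ * ‖ae‖ * ‖ae‖ := by gcongr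
      _ = δ * ‖ae‖ ^ 2 := by ring
  have hvv : ‖v‖ ^ 2 = c * (‖ae‖ ^ 2 + q) := by
    rw [← real_inner_self_eq_norm_sq]
    nth_rewrite 1 [hvdef]
    rw [sum_inner]
    have hterm : ∀ j ∈ Finset.univ, ⟪a j • Ξ j, v⟫ =
        c * (a j ^ 2) + c * (a j * E.mulVec a j) := by
      intro j _
      rw [real_inner_smul_left, ← hgram, hEa]; ring
    rw [Finset.sum_congr rfl hterm, Finset.sum_add_distrib, ← Finset.mul_sum,
      ← Finset.mul_sum, haenorm2, hqdef]
    ring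
  have hvlow : c / 2 * ‖ae‖ ^ 2 ≤ ‖v‖ ^ 2 := by
    have h1 : -(δ * ‖ae‖ ^ 2) ≤ q := by
      have := neg_abs_le q
      linarith
    rw [hvv]
    nlinarith [sq_nonneg ‖ae‖]
  have hwv : ‖v‖ ^ 2 ≤ ‖w‖ ^ 2 := by
    have h1 : ⟪s • μ, v⟫ = 0 := by rw [real_inner_smul_left, hμv]; ring
    have h2 : ‖w‖ ^ 2 = ‖s • μ‖ ^ 2 + ‖v‖ ^ 2 := by
      rw [hw2, norm_add_sq_real, h1]; ring
    nlinarith [sq_nonneg ‖s • μ‖]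
  have hsum : ∑ j, y j * yhat j = s * (∑ j, y j ^ 2) + c * s + c * t := by
    have hterm : ∀ j ∈ Finset.univ, y j * yhat j =
        y j ^ 2 * s + c * (a j * y j) + c * (y j * E.mulVec a j) := by
      intro j _
      rw [hyhat j, hX j, inner_add_left, real_inner_smul_left, hμw, hΞw, ← hgram, hEa]
      ring
    rw [Finset.sum_congr rfl hterm, Finset.sum_add_distrib, Finset.sum_add_distrib,
      ← Finset.mul_sum, ← Finset.mul_sum, ← Finset.sum_mul, ← hsdef, ← htdef]
    ring
  have hynn : (0 : ℝ) ≤ ∑ j, y j ^ 2 := Finset.sum_nonneg fun j _ => sq_nonneg _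
  have hD : 0 < c + ∑ j, y j ^ 2 := by linarith
  -- key bound : c * ‖ae‖ ≤ 2 * σ * √d * ‖w‖
  have h9 : c * ‖ae‖ ≤ 2 * σ * Real.sqrt d * ‖w‖ := by
    have hdd : Real.sqrt d ^ 2 = d := Real.sq_sqrt hdR.le
    have hs9 : (c * ‖ae‖) ^ 2 ≤ (2 * σ * Real.sqrt d * ‖w‖) ^ 2 := by
      have h1 : c / 2 * ‖ae‖ ^ 2 ≤ ‖w‖ ^ 2 := le_trans hvlow hwv
      have h2 := mul_le_mul_of_nonneg_left h1 hc.le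
      calc (c * ‖ae‖) ^ 2 = 2 * (c * (c / 2 * ‖ae‖ ^ 2)) := by ring
        _ ≤ 2 * (c * ‖w‖ ^ 2) := by linarith
        _ ≤ 4 * (c * ‖w‖ ^ 2) := by nlinarith [sq_nonneg ‖w‖]
        _ = (2 * σ * Real.sqrt d * ‖w‖) ^ 2 := by rw [hcdef]; ring_nf; rw [hdd]; ring
    have h3 : 0 ≤ c * ‖ae‖ := by positivity
    have h4 : 0 ≤ 2 * σ * Real.sqrt d * ‖w‖ := by positivity
    calc c * ‖ae‖ = Real.sqrt ((c * ‖ae‖) ^ 2) := (Real.sqrt_sq h3).symm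
      _ ≤ Real.sqrt ((2 * σ * Real.sqrt d * ‖w‖) ^ 2) := Real.sqrt_le_sqrt hs9
      _ = 2 * σ * Real.sqrt d * ‖w‖ := Real.sqrt_sq h4
  have hkey : c * t ≤ 2 * δ * σ * Real.sqrt d * Real.sqrt (∑ j, y j ^ 2) * ‖w‖ := by
    calc c * t ≤ c * |t| := by
          have := le_abs_self t
          nlinarith
      _ ≤ c * (δ * (‖ye‖ * ‖ae‖)) := by
          apply mul_le_mul_of_nonneg_left ht hc.le
      _ = δ * ‖ye‖ * (c * ‖ae‖) := by ring
      _ ≤ δ * ‖ye‖ * (2 * σ * Real.sqrt d * ‖w‖) := by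
          apply mul_le_mul_of_nonneg_left h9
          positivity
      _ = 2 * δ * σ * Real.sqrt d * ‖ye‖ * ‖w‖ := by ring
      _ = 2 * δ * σ * Real.sqrt d * Real.sqrt (∑ j, y j ^ 2) * ‖w‖ := by rw [hyenorm]
  rw [ge_iff_le, div_le_iff₀ hD, hμw]
  rw [hsum]
  linarith
end

section
/- Let h ∈ (1,2) and φ(z) := max(0,z)^h. Let (Ω, 𝔽, ℙ) be a probability space and let a, b : Ω → ℝ be square-integrable random variables. Then: (1) |E[φ(a+b) − φ(a)]| ≤ sqrt(E[4a² + 2])·sqrt(E[b²]) + h·(E[b²])^{h/2}; and (2) |E[φ(a+b) − φ(a)]| ≤ 2·E[1 + φ(a)]·sqrt(E[b²]) + h·(E[b²])^{h/2}. -/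
open MeasureTheory Real
open scoped RealInnerProductSpace ENNReal NNReal

lemma aux_rpow_sub_le (h : ℝ) (hh1 : 1 ≤ h) {s t : ℝ} (ht : 0 ≤ t) (hts : t ≤ s) :
    s ^ h - t ^ h ≤ h * s ^ (h - 1) * (s - t) := by
  have hs : 0 ≤ s := ht.trans hts
  rcases eq_or_lt_of_le hs with hs0 | hs0
  · have ht0 : t = 0 := le_antisymm (hs0 ▸ hts) ht
    subst ht0
    rw [← hs0, Real.zero_rpow (by linarith : h ≠ 0)]
    simp
  · have hber := one_add_mul_self_le_rpow_one_add (s := t / s - 1)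
      (by have := div_nonneg ht hs; linarith) hh1
    have h1 : (1 + (t / s - 1)) = t / s := by ring
    rw [h1] at hber
    have hspos : (0:ℝ) < s ^ h := Real.rpow_pos_of_pos hs0 h
    have hu : s ^ h = s ^ (h - 1) * s := by
      rw [← Real.rpow_add_one hs0.ne' (h - 1)]; norm_num
    have h2 : (1 + h * (t / s - 1)) * s ^ h ≤ (t / s) ^ h * s ^ h :=
      mul_le_mul_of_nonneg_right hber hspos.le
    have h3 : (t / s) ^ h * s ^ h = t ^ h := by
      rw [Real.div_rpow ht hs0.le, div_mul_cancel₀ _ hspos.ne']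
    have h4 : t / s * s = t := div_mul_cancel₀ _ hs0.ne'
    rw [h3] at h2
    have p5 : (t / s) * s ^ h = t * s ^ (h - 1) := by
      rw [Real.rpow_sub hs0, Real.rpow_one]
      ring
    nlinarith [h2, hu, p5]

lemma aux_abs_rpow_sub (h : ℝ) (hh1 : 1 ≤ h) {s t : ℝ} (hs : 0 ≤ s) (ht : 0 ≤ t) :
    |s ^ h - t ^ h| ≤ h * max s t ^ (h - 1) * |s - t| := by
  rcases le_total t s with hts | hst
  · rw [abs_of_nonneg (sub_nonneg.2 (Real.rpow_le_rpow ht hts (by linarith))),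
      abs_of_nonneg (sub_nonneg.2 hts), max_eq_left hts]
    exact aux_rpow_sub_le h hh1 ht hts
  · rw [abs_sub_comm, abs_of_nonneg (sub_nonneg.2 (Real.rpow_le_rpow hs hst (by linarith))),
      abs_sub_comm s t, abs_of_nonneg (sub_nonneg.2 hst), max_eq_right hst]
    exact aux_rpow_sub_le h hh1 hs hst

lemma aux_rpow_add_le (p : ℝ) (hp0 : 0 ≤ p) (hp1 : p ≤ 1) {x y : ℝ} (hx : 0 ≤ x) (hy : 0 ≤ y) :
    (x + y) ^ p ≤ x ^ p + y ^ p := by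
  have h2 := NNReal.coe_le_coe.2 (NNReal.rpow_add_le_add_rpow x.toNNReal y.toNNReal hp0 hp1)
  push_cast at h2
  rwa [Real.coe_toNNReal x hx, Real.coe_toNNReal y hy] at h2

lemma phi_diff_le (h : ℝ) (hh1 : 1 < h) (hh2 : h < 2) (x y : ℝ) :
    |phi h (x + y) - phi h x| ≤ h * max 0 x ^ (h - 1) * |y| + h * |y| ^ h := by
  have ht : (0:ℝ) ≤ max 0 x := le_max_left _ _
  have hs : (0:ℝ) ≤ max 0 (x + y) := le_max_left _ _
  set t := max 0 x with htd
  set s := max 0 (x + y) with hsd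
  have hst : |s - t| ≤ |y| := by
    have h1 := abs_max_sub_max_le_max 0 (x + y) 0 x
    simpa [add_sub_cancel_left] using h1
  have hmax : max s t ≤ t + |y| := by
    refine max_le (max_le (by positivity) ?_) (by nlinarith [abs_nonneg y, le_max_right (0:ℝ) x])
    calc x + y ≤ x + |y| := by linarith [le_abs_self y]
      _ ≤ t + |y| := by gcongr; exact le_max_right _ _
  have key := aux_abs_rpow_sub h hh1.le hs ht
  have hmono : max s t ^ (h - 1) ≤ t ^ (h - 1) + |y| ^ (h - 1) :=
    le_trans (Real.rpow_le_rpow (le_trans hs (le_max_left _ _)) hmax (by linarith))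
      (aux_rpow_add_le _ (by linarith) (by linarith) ht (abs_nonneg y))
  have hyh : |y| ^ (h - 1) * |y| = |y| ^ h := by
    rcases eq_or_ne y 0 with rfl | hy
    · rw [abs_zero, Real.zero_rpow (by linarith : h - 1 ≠ 0),
        Real.zero_rpow (by linarith : h ≠ 0)]
      ring
    · rw [← Real.rpow_add_one (abs_ne_zero.2 hy) (h - 1)]; norm_num
  have hmaxpow : (0:ℝ) ≤ max s t ^ (h - 1) := Real.rpow_nonneg (le_trans hs (le_max_left _ _)) _
  calc |phi h (x + y) - phi h x| = |s ^ h - t ^ h| := rfl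
    _ ≤ h * max s t ^ (h - 1) * |s - t| := key
    _ ≤ h * (t ^ (h - 1) + |y| ^ (h - 1)) * |y| := by
        apply mul_le_mul (by nlinarith [hmono]) hst (abs_nonneg _)
        exact mul_nonneg (by linarith)
          (add_nonneg (Real.rpow_nonneg ht _) (Real.rpow_nonneg (abs_nonneg y) _))
    _ = h * t ^ (h - 1) * |y| + h * |y| ^ h := by rw [← hyh]; ring

lemma max_sq_le (x : ℝ) : max 0 x ^ 2 ≤ x ^ 2 := by
  rcases le_total x 0 with h | h
  · rw [max_eq_left h]; simpa using sq_nonneg x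
  · rw [max_eq_right h]

lemma phi_le_one_add_sq (h : ℝ) (hh1 : 0 < h) (hh2 : h ≤ 2) (z : ℝ) : phi h z ≤ 1 + z ^ 2 := by
  unfold phi
  have ht : (0:ℝ) ≤ max 0 z := le_max_left _ _
  rcases le_total (max 0 z) 1 with h1 | h1
  · have := Real.rpow_le_one ht h1 hh1.le
    nlinarith [sq_nonneg z]
  · have h2 : max 0 z ^ h ≤ max 0 z ^ (2:ℝ) := Real.rpow_le_rpow_of_exponent_le h1 hh2
    rw [Real.rpow_two] at h2
    linarith [max_sq_le z]

lemma gsq_eq (h : ℝ) (hh1 : 1 < h) {t : ℝ} (ht : 0 ≤ t) :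
    (t ^ (h - 1)) ^ 2 = (t ^ 2) ^ (h - 1) := by
  rw [← Real.rpow_natCast (t ^ (h - 1)) 2, ← Real.rpow_natCast t 2,
    ← Real.rpow_mul ht, ← Real.rpow_mul ht]
  norm_num
  rw [mul_comm]

lemma gsq_le_one (h : ℝ) (hh1 : 1 < h) (hh2 : h < 2) (x : ℝ) :
    (h * max 0 x ^ (h - 1)) ^ 2 ≤ 4 * x ^ 2 + 2 := by
  have ht : (0:ℝ) ≤ max 0 x := le_max_left _ _
  have hsq := gsq_eq h hh1 ht
  have hAM := Real.geom_mean_le_arith_mean2_weighted (by linarith : (0:ℝ) ≤ h - 1)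
    (by linarith : (0:ℝ) ≤ 2 - h) (by positivity : (0:ℝ) ≤ max 0 x ^ 2)
    (by norm_num : (0:ℝ) ≤ 1) (by ring)
  rw [Real.one_rpow, mul_one] at hAM
  have c1 : h ^ 2 * (h - 1) ≤ 4 := by nlinarith
  have c2 : h ^ 2 * (2 - h) ≤ 2 := by
    nlinarith [mul_nonneg (sq_nonneg (h - 4/3)) (show (0:ℝ) ≤ h + 2/3 by linarith)]
  have hx2 := max_sq_le x
  have hn : (0:ℝ) ≤ (max 0 x) ^ 2 := by positivity
  have e1 : (h * max 0 x ^ (h - 1)) ^ 2 = h ^ 2 * ((max 0 x) ^ 2) ^ (h - 1) := by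
    rw [mul_pow, hsq]
  rw [e1]
  nlinarith [mul_le_mul_of_nonneg_left hAM (by positivity : (0:ℝ) ≤ h ^ 2),
    mul_nonneg (show (0:ℝ) ≤ 4 - h ^ 2 * (h - 1) by nlinarith) hn]

lemma gsq_le_two (h : ℝ) (hh1 : 1 < h) (hh2 : h < 2) (x : ℝ) :
    (h * max 0 x ^ (h - 1)) ^ 2 ≤ 4 * (1 + phi h x) := by
  have ht : (0:ℝ) ≤ max 0 x := le_max_left _ _
  have hphin : (0:ℝ) ≤ phi h x := Real.rpow_nonneg ht _
  have e1 : (h * max 0 x ^ (h - 1)) ^ 2 = h ^ 2 * ((max 0 x) ^ 2) ^ (h - 1) := by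
    rw [mul_pow, gsq_eq h hh1 ht]
  rw [e1]
  rcases le_total (max 0 x) 1 with h1 | h1
  · have h2 : ((max 0 x) ^ 2) ^ (h - 1) ≤ 1 :=
      Real.rpow_le_one (by positivity) (by nlinarith) (by linarith)
    nlinarith [Real.rpow_nonneg (show (0:ℝ) ≤ (max 0 x)^2 by positivity) (h-1)]
  · have h2 : ((max 0 x) ^ 2) ^ (h - 1) ≤ max 0 x ^ h := by
      rw [← gsq_eq h hh1 ht, ← Real.rpow_natCast (max 0 x ^ (h-1)) 2, ← Real.rpow_mul ht]
      exact Real.rpow_le_rpow_of_exponent_le h1 (by push_cast; nlinarith)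
    have hP : (0:ℝ) ≤ max 0 x ^ h := Real.rpow_nonneg ht h
    have h5 : h ^ 2 * ((max 0 x) ^ 2) ^ (h - 1) ≤ h ^ 2 * (max 0 x ^ h) :=
      mul_le_mul_of_nonneg_left h2 (sq_nonneg h)
    have h6 : h ^ 2 * (max 0 x ^ h) ≤ 4 * (max 0 x ^ h) := by
      nlinarith [mul_nonneg (show (0:ℝ) ≤ 4 - h ^ 2 by nlinarith) hP]
    have h7 : phi h x = max 0 x ^ h := rfl
    rw [h7]
    linarith

lemma phi_nonneg (h z : ℝ) : 0 ≤ phi h z := Real.rpow_nonneg (le_max_left _ _) _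

/-- **Perturbation bounds for expectations of the activation.**
For square-integrable random variables `a, b` on a probability space and
`φ(z) = max(0,z)^h` with `h ∈ (1,2)`:
(1) `|E[φ(a+b) - φ(a)]| ≤ √(E[4a²+2])·√(E[b²]) + h·(E[b²])^{h/2}`, and
(2) `|E[φ(a+b) - φ(a)]| ≤ 2·E[1+φ(a)]·√(E[b²]) + h·(E[b²])^{h/2}`. -/
theorem stmt15 (h : ℝ) (hh1 : 1 < h) (hh2 : h < 2)
    {Ω : Type*} [MeasurableSpace Ω] (P : Measure Ω) [IsProbabilityMeasure P]
    (a b : Ω → ℝ) (ha : MemLp a 2 P) (hb : MemLp b 2 P) :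
    |∫ ω, (phi h (a ω + b ω) - phi h (a ω)) ∂P| ≤
        Real.sqrt (∫ ω, (4 * a ω ^ 2 + 2) ∂P) * Real.sqrt (∫ ω, b ω ^ 2 ∂P) +
          h * (∫ ω, b ω ^ 2 ∂P) ^ (h / 2) ∧
    |∫ ω, (phi h (a ω + b ω) - phi h (a ω)) ∂P| ≤
        2 * (∫ ω, (1 + phi h (a ω)) ∂P) * Real.sqrt (∫ ω, b ω ^ 2 ∂P) +
          h * (∫ ω, b ω ^ 2 ∂P) ^ (h / 2) := by
  have h0 : (0:ℝ) < h := by linarith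
  set G : ℝ → ℝ := fun z => h * max 0 z ^ (h - 1) with hGdef
  have hGcont : Continuous G := continuous_const.mul
    ((continuous_const.max continuous_id).rpow_const (fun x => Or.inr (by linarith)))
  have hphiCont : Continuous (phi h) := by
    unfold phi
    exact (continuous_const.max continuous_id).rpow_const (fun x => Or.inr h0.le)
  have haM : AEStronglyMeasurable a P := ha.aestronglyMeasurable
  have hbM : AEStronglyMeasurable b P := hb.aestronglyMeasurable
  have habM : AEStronglyMeasurable (fun ω => a ω + b ω) P := haM.add hbM
  have habsM : AEStronglyMeasurable (fun ω => |b ω|) P := by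
    simpa [Real.norm_eq_abs] using hbM.norm
  have ha2 : Integrable (fun ω => a ω ^ 2) P := ha.integrable_sq
  have hb2 : Integrable (fun ω => b ω ^ 2) P := hb.integrable_sq
  have hab2 : Integrable (fun ω => (a ω + b ω) ^ 2) P := (ha.add hb).integrable_sq
  have hbound1 : Integrable (fun ω => 4 * a ω ^ 2 + 2) P :=
    (ha2.const_mul 4).add (integrable_const 2)
  have hphia : Integrable (fun ω => phi h (a ω)) P := by
    refine Integrable.mono' ((integrable_const (1:ℝ)).add ha2)
      (hphiCont.comp_aestronglyMeasurable haM) (ae_of_all _ fun ω => ?_)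
    rw [Real.norm_eq_abs, abs_of_nonneg (phi_nonneg h _)]
    exact phi_le_one_add_sq h h0 hh2.le _
  have hphiab : Integrable (fun ω => phi h (a ω + b ω)) P := by
    refine Integrable.mono' ((integrable_const (1:ℝ)).add hab2)
      (hphiCont.comp_aestronglyMeasurable habM) (ae_of_all _ fun ω => ?_)
    rw [Real.norm_eq_abs, abs_of_nonneg (phi_nonneg h _)]
    exact phi_le_one_add_sq h h0 hh2.le _
  have hDiffInt : Integrable (fun ω => phi h (a ω + b ω) - phi h (a ω)) P := hphiab.sub hphia
  have gM : AEStronglyMeasurable (fun ω => G (a ω)) P := hGcont.comp_aestronglyMeasurable haM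
  have gnn : ∀ ω, 0 ≤ G (a ω) := fun ω =>
    mul_nonneg h0.le (Real.rpow_nonneg (le_max_left _ _) _)
  have hg2 : Integrable (fun ω => G (a ω) ^ 2) P := by
    refine Integrable.mono' hbound1 ?_ (ae_of_all _ fun ω => ?_)
    · exact (hGcont.pow 2).comp_aestronglyMeasurable haM
    · rw [Real.norm_eq_abs, abs_of_nonneg (sq_nonneg _)]
      exact gsq_le_one h hh1 hh2 (a ω)
  have hofReal2 : ENNReal.ofReal (2:ℝ) = 2 := by
    simp
  have hgL2 : MemLp (fun ω => G (a ω)) (ENNReal.ofReal 2) P := by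
    rw [hofReal2]
    exact (memLp_two_iff_integrable_sq gM).2 hg2
  have habsL2 : MemLp (fun ω => |b ω|) (ENNReal.ofReal 2) P := by
    rw [hofReal2]
    simpa [Real.norm_eq_abs] using hb.norm
  have conj22 : Real.HolderConjugate 2 2 := Real.HolderConjugate.two_two
  -- Cauchy-Schwarz
  have hCS : ∫ ω, G (a ω) * |b ω| ∂P ≤
      Real.sqrt (∫ ω, G (a ω) ^ 2 ∂P) * Real.sqrt (∫ ω, b ω ^ 2 ∂P) := by
    have h1 := integral_mul_le_Lp_mul_Lq_of_nonneg conj22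
      (ae_of_all _ gnn) (ae_of_all _ fun ω => abs_nonneg (b ω)) hgL2 habsL2
    simp_rw [Real.rpow_two, sq_abs] at h1
    rwa [← Real.sqrt_eq_rpow, ← Real.sqrt_eq_rpow] at h1
  -- integrability of products
  have hgb_int : Integrable (fun ω => G (a ω) * |b ω|) P := by
    refine Integrable.mono' (hg2.add hb2) (gM.mul habsM) (ae_of_all _ fun ω => ?_)
    rw [Real.norm_eq_abs, abs_of_nonneg (mul_nonneg (gnn ω) (abs_nonneg _))]
    show G (a ω) * |b ω| ≤ G (a ω) ^ 2 + b ω ^ 2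
    nlinarith [sq_nonneg (G (a ω) - |b ω|), sq_abs (b ω)]
  have hbh_int : Integrable (fun ω => |b ω| ^ h) P := by
    have hle : ENNReal.ofReal h ≤ 2 := by
      rw [← hofReal2]; exact ENNReal.ofReal_le_ofReal hh2.le
    have h1 := (hb.mono_exponent hle).integrable_norm_rpow
      ((ENNReal.ofReal_pos.2 h0).ne') ENNReal.ofReal_ne_top
    rw [ENNReal.toReal_ofReal h0.le] at h1
    simpa [Real.norm_eq_abs] using h1
  have hRHSint : Integrable (fun ω => G (a ω) * |b ω| + h * |b ω| ^ h) P :=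
    hgb_int.add (hbh_int.const_mul h)
  -- Jensen via Hölder: ∫ |b|^h ≤ (∫ b²)^(h/2)
  have hconj : Real.HolderConjugate (2/h) (2/(2-h)) := by
    rw [Real.holderConjugate_iff]; constructor
    · rw [lt_div_iff₀ h0]; linarith
    · rw [inv_div, inv_div]; ring
  have hbh_mem : MemLp (fun ω => |b ω| ^ h) (ENNReal.ofReal (2/h)) P := by
    have hiff := memLp_norm_rpow_iff (q := ENNReal.ofReal h) (p := (2:ℝ≥0∞)) hbM
      ((ENNReal.ofReal_pos.2 h0).ne') ENNReal.ofReal_ne_top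
    rw [ENNReal.toReal_ofReal h0.le] at hiff
    have hdiv : (2:ℝ≥0∞) / ENNReal.ofReal h = ENNReal.ofReal (2/h) := by
      rw [ENNReal.ofReal_div_of_pos h0, hofReal2]
    rw [hdiv] at hiff
    have h2 := hiff.2 hb
    simpa [Real.norm_eq_abs] using h2
  have hJen : ∫ ω, |b ω| ^ h ∂P ≤ (∫ ω, b ω ^ 2 ∂P) ^ (h/2 : ℝ) := by
    have h1 := integral_mul_le_Lp_mul_Lq_of_nonneg hconj
      (f := fun ω => |b ω| ^ h) (g := fun _ => (1:ℝ))
      (ae_of_all _ fun ω => Real.rpow_nonneg (abs_nonneg _) _)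
      (ae_of_all _ fun ω => zero_le_one) hbh_mem (memLp_const 1)
    simp only [mul_one, Real.one_rpow] at h1
    rw [integral_const, probReal_univ, smul_eq_mul, mul_one,
      Real.one_rpow, mul_one] at h1
    have h2 : ∀ ω, (|b ω| ^ h) ^ (2/h : ℝ) = b ω ^ 2 := fun ω => by
      rw [← Real.rpow_mul (abs_nonneg _), show h * (2/h) = 2 by field_simp,
        Real.rpow_two, sq_abs]
    simp_rw [h2] at h1
    rwa [one_div_div] at h1
  -- main decomposition
  have hMain : |∫ ω, (phi h (a ω + b ω) - phi h (a ω)) ∂P| ≤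
      ∫ ω, G (a ω) * |b ω| ∂P + h * ∫ ω, |b ω| ^ h ∂P := by
    calc |∫ ω, (phi h (a ω + b ω) - phi h (a ω)) ∂P|
        ≤ ∫ ω, |phi h (a ω + b ω) - phi h (a ω)| ∂P := by
          simpa [Real.norm_eq_abs] using
            norm_integral_le_integral_norm (fun ω => phi h (a ω + b ω) - phi h (a ω)) (μ := P)
      _ ≤ ∫ ω, (G (a ω) * |b ω| + h * |b ω| ^ h) ∂P := by
          refine integral_mono hDiffInt.abs hRHSint fun ω => ?_
          exact phi_diff_le h hh1 hh2 (a ω) (b ω)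
      _ = ∫ ω, G (a ω) * |b ω| ∂P + h * ∫ ω, |b ω| ^ h ∂P := by
          rw [integral_add hgb_int (hbh_int.const_mul h), integral_const_mul]
  have hsqb : (0:ℝ) ≤ Real.sqrt (∫ ω, b ω ^ 2 ∂P) := Real.sqrt_nonneg _
  have hJen' : h * ∫ ω, |b ω| ^ h ∂P ≤ h * (∫ ω, b ω ^ 2 ∂P) ^ (h/2 : ℝ) :=
    mul_le_mul_of_nonneg_left hJen h0.le
  constructor
  · have E1 : ∫ ω, G (a ω) ^ 2 ∂P ≤ ∫ ω, (4 * a ω ^ 2 + 2) ∂P :=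
      integral_mono hg2 hbound1 fun ω => gsq_le_one h hh1 hh2 (a ω)
    have : Real.sqrt (∫ ω, G (a ω) ^ 2 ∂P) ≤ Real.sqrt (∫ ω, (4 * a ω ^ 2 + 2) ∂P) :=
      Real.sqrt_le_sqrt E1
    calc |∫ ω, (phi h (a ω + b ω) - phi h (a ω)) ∂P|
        ≤ ∫ ω, G (a ω) * |b ω| ∂P + h * ∫ ω, |b ω| ^ h ∂P := hMain
      _ ≤ Real.sqrt (∫ ω, (4 * a ω ^ 2 + 2) ∂P) * Real.sqrt (∫ ω, b ω ^ 2 ∂P) +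
          h * (∫ ω, b ω ^ 2 ∂P) ^ (h/2 : ℝ) := by
          refine add_le_add (hCS.trans (mul_le_mul_of_nonneg_right this hsqb)) hJen'
  · have h1phia : Integrable (fun ω => 1 + phi h (a ω)) P := (integrable_const 1).add hphia
    have E2 : ∫ ω, G (a ω) ^ 2 ∂P ≤ 4 * ∫ ω, (1 + phi h (a ω)) ∂P := by
      have := integral_mono hg2 (h1phia.const_mul 4) fun ω => by
        simpa [mul_add] using gsq_le_two h hh1 hh2 (a ω)
      rwa [integral_const_mul] at this
    have F : (1:ℝ) ≤ ∫ ω, (1 + phi h (a ω)) ∂P := by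
      have := integral_mono (integrable_const (1:ℝ)) h1phia fun ω => by
        have := phi_nonneg h (a ω); simp; linarith
      rwa [integral_const, probReal_univ, one_smul] at this
    have E3 : ∫ ω, G (a ω) ^ 2 ∂P ≤ (2 * ∫ ω, (1 + phi h (a ω)) ∂P) ^ 2 := by
      nlinarith [E2, F]
    have E4 : Real.sqrt (∫ ω, G (a ω) ^ 2 ∂P) ≤ 2 * ∫ ω, (1 + phi h (a ω)) ∂P := by
      have := Real.sqrt_le_sqrt E3
      rwa [Real.sqrt_sq (by linarith)] at this
    calc |∫ ω, (phi h (a ω + b ω) - phi h (a ω)) ∂P|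
        ≤ ∫ ω, G (a ω) * |b ω| ∂P + h * ∫ ω, |b ω| ^ h ∂P := hMain
      _ ≤ 2 * (∫ ω, (1 + phi h (a ω)) ∂P) * Real.sqrt (∫ ω, b ω ^ 2 ∂P) +
          h * (∫ ω, b ω ^ 2 ∂P) ^ (h/2 : ℝ) := by
          refine add_le_add (hCS.trans (mul_le_mul_of_nonneg_right E4 hsqb)) hJen'
end

section
/- Let h ∈ (1,2), φ(z) := max(0,z)^h, and k > 0. Define γ₀ := 2·φ(√(1/(2k))) and γ⋆ := φ(√(k/(1+k)) + √(1/(k(1+k)))), and consider the function F(b,c,d) := φ(b+c) + φ(−b+d) on ℝ³. (1) If γ⋆ > γ₀, then the supremum of F over the set K := {(b,c,d) : b² + k(c²+d²) ≤ 1, b ≥ 0} equals γ⋆ and is attained at the point (b⋆, c⋆, d⋆) = (√(k/(1+k)), √(1/(k(1+k))), 0) and at no other point of K. (2) If γ₀ > γ⋆, then the supremum of F over the set {(b,c,d) : b² + k(c²+d²) ≤ 1} equals γ₀ and is attained at a point with b = 0 (namely (0, √(1/(2k)), √(1/(2k)))). -/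
set_option maxHeartbeats 1000000


open MeasureTheory Real
open scoped RealInnerProductSpace ENNReal NNReal

namespace ST16

noncomputable def psiF (h t : ℝ) : ℝ := (1+t)^h + (1-t)^h
noncomputable def psi1 (h t : ℝ) : ℝ := h*((1+t)^(h-1) - (1-t)^(h-1))
noncomputable def psi2 (h t : ℝ) : ℝ := h*(h-1)*((1+t)^(h-2) + (1-t)^(h-2))
noncomputable def psi3 (h t : ℝ) : ℝ := h*(h-1)*(h-2)*((1+t)^(h-3) - (1-t)^(h-3))
noncomputable def sF (h t : ℝ) : ℝ := t * psi1 h t - 2*psiF h t + 4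
noncomputable def s1F (h t : ℝ) : ℝ := t * psi2 h t - psi1 h t

lemma hasDerivAt_plus (q : ℝ) {t : ℝ} (ht1 : 1 + t ≠ 0) :
    HasDerivAt (fun t : ℝ => (1+t)^q) (q * (1+t)^(q-1)) t := by
  have := (HasDerivAt.const_add 1 (hasDerivAt_id t)).rpow_const (p := q) (Or.inl ht1)
  simpa using this

lemma hasDerivAt_minus (q : ℝ) {t : ℝ} (ht2 : 1 - t ≠ 0) :
    HasDerivAt (fun t : ℝ => (1-t)^q) (-(q * (1-t)^(q-1))) t := by
  have := (HasDerivAt.const_sub 1 (hasDerivAt_id t)).rpow_const (p := q) (Or.inl ht2)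
  simp only [id_eq] at this
  convert this using 1
  ring

lemma hasDerivAt_psiF (h : ℝ) {t : ℝ} (ht1 : 1 + t ≠ 0) (ht2 : 1 - t ≠ 0) :
    HasDerivAt (psiF h) (psi1 h t) t := by
  have := (hasDerivAt_plus h ht1).add (hasDerivAt_minus h ht2)
  refine this.congr_deriv ?_
  unfold psi1; ring

lemma hasDerivAt_psi1 (h : ℝ) {t : ℝ} (ht1 : 1 + t ≠ 0) (ht2 : 1 - t ≠ 0) :
    HasDerivAt (psi1 h) (psi2 h t) t := by
  have := (((hasDerivAt_plus (h-1) ht1).sub (hasDerivAt_minus (h-1) ht2))).const_mul h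
  refine this.congr_deriv ?_
  unfold psi2
  rw [show h - 1 - 1 = h - 2 by ring]; ring

lemma hasDerivAt_psi2 (h : ℝ) {t : ℝ} (ht1 : 1 + t ≠ 0) (ht2 : 1 - t ≠ 0) :
    HasDerivAt (psi2 h) (psi3 h t) t := by
  have := (((hasDerivAt_plus (h-2) ht1).add (hasDerivAt_minus (h-2) ht2))).const_mul (h*(h-1))
  refine this.congr_deriv ?_
  unfold psi3
  rw [show h - 2 - 1 = h - 3 by ring]; ring

lemma hasDerivAt_s1F (h : ℝ) {t : ℝ} (ht1 : 1 + t ≠ 0) (ht2 : 1 - t ≠ 0) :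
    HasDerivAt (s1F h) (t * psi3 h t) t := by
  have := ((hasDerivAt_id t).mul (hasDerivAt_psi2 h ht1 ht2)).sub (hasDerivAt_psi1 h ht1 ht2)
  refine this.congr_deriv ?_
  simp only [id_eq]; ring

lemma hasDerivAt_sF (h : ℝ) {t : ℝ} (ht1 : 1 + t ≠ 0) (ht2 : 1 - t ≠ 0) :
    HasDerivAt (sF h) (s1F h t) t := by
  have := (((hasDerivAt_id t).mul (hasDerivAt_psi1 h ht1 ht2)).sub
    ((hasDerivAt_psiF h ht1 ht2).const_mul 2)).add_const 4
  refine this.congr_deriv ?_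
  simp [s1F]; ring


variable {h : ℝ} (hh1 : 1 < h) (hh2 : h < 2)

section
include hh1 hh2

lemma psi3_nonneg {t : ℝ} (ht0 : 0 ≤ t) (ht1 : t < 1) : 0 ≤ psi3 h t := by
  have h1 : (0:ℝ) < 1 - t := by linarith
  have h2 : (1:ℝ) - t ≤ 1 + t := by linarith
  have h3 : (1+t)^(h-3) ≤ (1-t)^(h-3) :=
    Real.rpow_le_rpow_of_nonpos h1 h2 (by linarith)
  have h4 : (0:ℝ) < h*(h-1) := by nlinarith
  have h5 : psi3 h t = (h*(h-1)) * ((2-h) * ((1-t)^(h-3) - (1+t)^(h-3))) := by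
    unfold psi3; ring
  rw [h5]
  exact mul_nonneg h4.le (mul_nonneg (by linarith) (sub_nonneg.2 h3))

lemma s1F_nonneg {t : ℝ} (ht0 : 0 ≤ t) (ht1 : t < 1) : 0 ≤ s1F h t := by
  have hmono : MonotoneOn (s1F h) (Set.Ico (0:ℝ) 1) := by
    apply monotoneOn_of_deriv_nonneg (convex_Ico 0 1)
    · intro x hx
      exact (hasDerivAt_s1F h (by simp at hx ⊢; linarith [hx.1]) (by simp at hx ⊢; linarith [hx.2])).continuousAt.continuousWithinAt
    · intro x hx
      rw [interior_Ico] at hx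
      exact (hasDerivAt_s1F h (by simp at hx ⊢; linarith [hx.1]) (by simp at hx ⊢; linarith [hx.2])).differentiableAt.differentiableWithinAt
    · intro x hx
      rw [interior_Ico] at hx
      rw [(hasDerivAt_s1F h (by simp at hx ⊢; linarith [hx.1]) (by simp at hx ⊢; linarith [hx.2])).deriv]
      exact mul_nonneg (le_of_lt hx.1) (psi3_nonneg hh1 hh2 (le_of_lt hx.1) hx.2)
  have h0 : s1F h 0 = 0 := by
    simp [s1F, psi1]
  have := hmono (Set.mem_Ico.2 ⟨le_refl 0, one_pos⟩) (Set.mem_Ico.2 ⟨ht0, ht1⟩) ht0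
  rwa [h0] at this

lemma sF_nonneg {t : ℝ} (ht0 : 0 ≤ t) (ht1 : t < 1) : 0 ≤ sF h t := by
  have hmono : MonotoneOn (sF h) (Set.Ico (0:ℝ) 1) := by
    apply monotoneOn_of_deriv_nonneg (convex_Ico 0 1)
    · intro x hx
      exact (hasDerivAt_sF h (by simp at hx ⊢; linarith [hx.1]) (by simp at hx ⊢; linarith [hx.2])).continuousAt.continuousWithinAt
    · intro x hx
      rw [interior_Ico] at hx
      exact (hasDerivAt_sF h (by simp at hx ⊢; linarith [hx.1]) (by simp at hx ⊢; linarith [hx.2])).differentiableAt.differentiableWithinAt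
    · intro x hx
      rw [interior_Ico] at hx
      rw [(hasDerivAt_sF h (by simp at hx ⊢; linarith [hx.1]) (by simp at hx ⊢; linarith [hx.2])).deriv]
      exact s1F_nonneg hh1 hh2 (le_of_lt hx.1) hx.2
  have h0 : sF h 0 = 0 := by
    simp [sF, psiF, psi1]
    norm_num
  have := hmono (Set.mem_Ico.2 ⟨le_refl 0, one_pos⟩) (Set.mem_Ico.2 ⟨ht0, ht1⟩) ht0
  rwa [h0] at this

lemma eta_mono : MonotoneOn (fun t => (psiF h t - 2)/t^2) (Set.Ioc (0:ℝ) 1) := by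
  apply monotoneOn_of_deriv_nonneg (convex_Ioc 0 1)
  · apply ContinuousOn.div
    · apply ContinuousOn.sub _ continuousOn_const
      apply ContinuousOn.add
      · apply ContinuousOn.rpow_const (by fun_prop)
        intro x hx; left; simp at hx ⊢; linarith [hx.1]
      · apply ContinuousOn.rpow_const (by fun_prop)
        intro x hx; right; linarith
    · fun_prop
    · intro x hx; simp at hx; exact pow_ne_zero 2 (ne_of_gt hx.1)
  · intro x hx
    rw [interior_Ioc] at hx
    have h1 : (1:ℝ) + x ≠ 0 := by simp at hx ⊢; linarith [hx.1]
    have h2 : (1:ℝ) - x ≠ 0 := by simp at hx ⊢; linarith [hx.2]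
    have hx0 : x ≠ 0 := ne_of_gt hx.1
    exact (((hasDerivAt_psiF h h1 h2).sub_const 2).div (hasDerivAt_pow 2 x) (pow_ne_zero 2 (ne_of_gt hx.1))).differentiableAt.differentiableWithinAt
  · intro x hx
    rw [interior_Ioc] at hx
    have h1 : (1:ℝ) + x ≠ 0 := by simp at hx ⊢; linarith [hx.1]
    have h2 : (1:ℝ) - x ≠ 0 := by simp at hx ⊢; linarith [hx.2]
    have hd := ((hasDerivAt_psiF h h1 h2).sub_const 2).div (hasDerivAt_pow 2 x) (pow_ne_zero 2 (ne_of_gt hx.1))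
    rw [show deriv (fun t => (psiF h t - 2) / t ^ 2) x = _ from hd.deriv]
    apply div_nonneg _ (by positivity)
    have hs := sF_nonneg hh1 hh2 (le_of_lt hx.1) hx.2
    unfold sF at hs
    norm_num
    nlinarith [mul_nonneg (le_of_lt hx.1) hs]

lemma psi_le {t : ℝ} (ht0 : 0 ≤ t) (ht1 : t ≤ 1) :
    psiF h t ≤ 2 + (2^h - 2) * t^2 := by
  rcases eq_or_lt_of_le ht0 with h0 | h0
  · norm_num [psiF, ← h0, Real.one_rpow]
  · have hη := eta_mono hh1 hh2 (Set.mem_Ioc.2 ⟨h0, ht1⟩) (Set.mem_Ioc.2 ⟨one_pos, le_refl 1⟩) ht1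
    have h1 : psiF h 1 = 2^h := by
      simp [psiF]
      rw [Real.zero_rpow (by linarith)]
      norm_num
    simp only [h1, one_pow, div_one] at hη
    have ht2 : (0:ℝ) < t^2 := by positivity
    rw [div_le_iff₀ ht2] at hη
    linarith

end

lemma key (hh1 : 1 < h) (hh2 : h < 2) {t : ℝ} (ht0 : 0 ≤ t) (ht1 : t ≤ 1) :
    (psiF h t)^(2/h) ≤ 2^(2/h)*(1-t^2) + 4*t^2 := by
  have hh0 : (0:ℝ) < h := by linarith
  have h2h : 1 ≤ 2/h := by rw [le_div_iff₀ hh0]; linarith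
  have hψ0 : 0 ≤ psiF h t := by
    unfold psiF
    have := Real.rpow_nonneg (by linarith : (0:ℝ) ≤ 1+t) h
    have := Real.rpow_nonneg (by linarith : (0:ℝ) ≤ 1-t) h
    linarith
  have hψ : psiF h t ≤ (1-t^2)*2 + t^2*(2^h) := by
    have := psi_le hh1 hh2 ht0 ht1; nlinarith
  have h1 : (psiF h t)^(2/h) ≤ ((1-t^2)*2 + t^2*(2^h))^(2/h) :=
    Real.rpow_le_rpow hψ0 hψ (by positivity)
  have ht2a : (0:ℝ) ≤ 1 - t^2 := by nlinarith
  have ht2b : (0:ℝ) ≤ t^2 := by positivity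
  have hsum : (1 - t^2) + t^2 = 1 := by ring
  have hcx : ((1-t^2) * 2 + t^2 * (2:ℝ)^h)^(2/h)
      ≤ (1-t^2)*(2:ℝ)^(2/h) + t^2*((2:ℝ)^h)^(2/h) := by
    have := (convexOn_rpow (p := 2/h) h2h).2 (Set.mem_Ici.2 (by norm_num : (0:ℝ) ≤ 2))
      (Set.mem_Ici.2 (Real.rpow_nonneg (by norm_num : (0:ℝ) ≤ 2) h)) ht2a ht2b hsum
    simpa [smul_eq_mul] using this
  have h4 : ((2:ℝ)^h)^(2/h) = 4 := by
    rw [← Real.rpow_mul (by norm_num : (0:ℝ) ≤ 2)]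
    rw [show h * (2/h) = 2 by field_simp]
    rw [show (2:ℝ) = ((2:ℕ):ℝ) by norm_num, Real.rpow_natCast]
    norm_num
  rw [h4] at hcx
  calc (psiF h t)^(2/h) ≤ ((1-t^2)*2 + t^2*(2^h))^(2/h) := h1
    _ ≤ (1-t^2)*2^(2/h) + t^2*4 := hcx
    _ = 2^(2/h)*(1-t^2) + 4*t^2 := by ring

lemma core_aux (hh1 : 1 < h) (hh2 : h < 2) {k u v : ℝ} (hk : 0 < k) (hv : 0 ≤ v) (hvu : v ≤ u)
    (hcon : k*(u^2+v^2)*(1+2*k) - k^2*(u-v)^2 ≤ 1+2*k) :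
    u^h + v^h ≤ (max (2^(2/h)/(2*k)) ((1+2*k)/(k*(1+k))))^(h/2) := by
  have hh0 : (0:ℝ) < h := by linarith
  set M := max (2^(2/h)/(2*k)) ((1+2*k)/(k*(1+k))) with hM
  have hM1 : 2^(2/h) ≤ 2*k*M := by
    have : 2^(2/h)/(2*k) ≤ M := le_max_left _ _
    rw [div_le_iff₀ (by positivity)] at this; linarith
  have hM2 : (1+2*k) ≤ k*(1+k)*M := by
    have : (1+2*k)/(k*(1+k)) ≤ M := le_max_right _ _
    rw [div_le_iff₀ (by positivity)] at this; linarith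
  have hM0 : 0 ≤ M := le_trans (by positivity) (le_max_left _ _)
  clear hM
  clear_value M
  have hu : 0 ≤ u := le_trans hv hvu
  rcases eq_or_lt_of_le (by linarith : (0:ℝ) ≤ u + v) with hS | hS
  · have hu0 : u = 0 := by linarith
    have hv0 : v = 0 := by linarith
    rw [hu0, hv0, Real.zero_rpow (ne_of_gt hh0)]
    norm_num
    exact Real.rpow_nonneg hM0 _
  · set S := u + v with hSdef
    set τ := (u - v)/S with hτ
    have hτ0 : 0 ≤ τ := by apply div_nonneg (by linarith) (by linarith)
    have hτ1 : τ ≤ 1 := by rw [hτ, div_le_one hS]; linarith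
    have huS : u = (S/2)*(1+τ) := by field_simp [hτ]; linarith [show S * τ = u - v by rw [hτ]; field_simp [hS.ne']]
    have hvS : v = (S/2)*(1-τ) := by field_simp [hτ]; linarith [show S * τ = u - v by rw [hτ]; field_simp [hS.ne']]
    rw [huS, hvS] at hcon ⊢
    clear hτ hSdef huS hvS hvu hv hu
    clear_value S τ
    have hS2 : k * S^2 * (1+2*k+τ^2) ≤ 2*(1+2*k) := by
      nlinarith [hcon]
    have hSd2 : (0:ℝ) ≤ S/2 := by linarith
    have hψ0 : 0 ≤ psiF h τ := by
      unfold psiF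
      have := Real.rpow_nonneg (by linarith : (0:ℝ) ≤ 1+τ) h
      have := Real.rpow_nonneg (by linarith : (0:ℝ) ≤ 1-τ) h
      linarith
    have e3 : (S/2)^h = (S^2/4)^(h/2) := by
      rw [show S^2/4 = (S/2)^2 by ring, show ((S/2)^2 : ℝ) = (S/2)^((2:ℕ):ℝ) by
        rw [Real.rpow_natCast]]
      rw [← Real.rpow_mul hSd2]
      rw [show ((2:ℕ):ℝ) * (h/2) = h by push_cast; ring]
    have e4 : psiF h τ = ((psiF h τ)^(2/h))^(h/2) := by
      rw [← Real.rpow_mul hψ0, show (2/h)*(h/2) = 1 by field_simp, Real.rpow_one]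
    have hrw : (S/2*(1+τ))^h + (S/2*(1-τ))^h = (S^2/4 * (psiF h τ)^(2/h))^(h/2) := by
      have e1 : (S/2*(1+τ))^h = (S/2)^h * (1+τ)^h := Real.mul_rpow hSd2 (by linarith)
      have e2 : (S/2*(1-τ))^h = (S/2)^h * (1-τ)^h := Real.mul_rpow hSd2 (by linarith)
      rw [e1, e2, ← mul_add]
      rw [Real.mul_rpow (by positivity) (Real.rpow_nonneg hψ0 _), ← e3, ← e4]
      rfl
    rw [hrw]
    apply Real.rpow_le_rpow (by positivity) _ (by positivity)
    have hkey := key hh1 hh2 hτ0 hτ1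
    have h2r : (0:ℝ) ≤ 2^(2/h) := Real.rpow_nonneg (by norm_num) _
    have ht2 : (0:ℝ) ≤ 1 - τ^2 := by nlinarith
    have hN0 : (0:ℝ) ≤ 2^(2/h)*(1-τ^2) + 4*τ^2 := by
      nlinarith [mul_nonneg h2r ht2]
    have hstep : S^2/4 * (psiF h τ)^(2/h) ≤ S^2/4 * (2^(2/h)*(1-τ^2) + 4*τ^2) :=
      mul_le_mul_of_nonneg_left hkey (by positivity)
    refine le_trans hstep ?_
    have hmed : (1+2*k) * (2^(2/h)*(1-τ^2) + 4*τ^2) ≤ M * (2*k*(1+2*k+τ^2)) := by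
      have e1 : (1-τ^2)*(1+2*k)*(2^(2/h)) ≤ (1-τ^2)*(1+2*k)*(2*k*M) :=
        mul_le_mul_of_nonneg_left hM1 (mul_nonneg ht2 (by linarith))
      have e2 : τ^2*4*(1+2*k) ≤ τ^2*4*(k*(1+k)*M) :=
        mul_le_mul_of_nonneg_left hM2 (by positivity)
      linarith [e1, e2]
    have hpos : (0:ℝ) < k*(1+2*k+τ^2) := mul_pos hk (by linarith [sq_nonneg τ])
    have step1 : (S^2/4*(2^(2/h)*(1-τ^2)+4*τ^2)) * (k*(1+2*k+τ^2)) ≤ M * (k*(1+2*k+τ^2)) := by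
      linarith [mul_le_mul_of_nonneg_right hS2 hN0, hmed]
    exact le_of_mul_le_mul_right step1 hpos

lemma core (hh1 : 1 < h) (hh2 : h < 2) {k u v : ℝ} (hk : 0 < k) (hu : 0 ≤ u) (hv : 0 ≤ v)
    (hcon : k*(u^2+v^2)*(1+2*k) - k^2*(u-v)^2 ≤ 1+2*k) :
    u^h + v^h ≤ (max (2^(2/h)/(2*k)) ((1+2*k)/(k*(1+k))))^(h/2) := by
  rcases le_total v u with hvu | hvu
  · exact core_aux hh1 hh2 hk hv hvu hcon
  · have := core_aux hh1 hh2 hk hu hvu (by nlinarith [hcon])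
    linarith [this]


lemma sq_rpow_half {z : ℝ} (hz : 0 ≤ z) : (z^2)^(h/2) = z^h := by
  rw [show ((z^2 : ℝ)) = z^((2:ℕ):ℝ) by rw [Real.rpow_natCast], ← Real.rpow_mul hz]
  push_cast
  congr 1
  ring

lemma phi_of_nonpos {z : ℝ} (hh0 : 0 < h) (hz : z ≤ 0) : phi h z = 0 := by
  unfold phi
  rw [max_eq_left hz, Real.zero_rpow (ne_of_gt hh0)]

lemma phi_of_nonneg {z : ℝ} (hz : 0 ≤ z) : phi h z = z^h := by
  unfold phi; rw [max_eq_right hz]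

lemma sqrt_rpow_h {x : ℝ} (hx : 0 ≤ x) : (Real.sqrt x)^h = x^(h/2) := by
  rw [← sq_rpow_half (Real.sqrt_nonneg x), Real.sq_sqrt hx]

lemma phi_sqrt {x : ℝ} (hx : 0 ≤ x) : phi h (Real.sqrt x) = x^(h/2) := by
  rw [phi_of_nonneg (Real.sqrt_nonneg x), sqrt_rpow_h hx]

-- √(k/(1+k)) + √(1/(k(1+k))) = √((1+k)/k)
lemma sqrt_sum_eq {k : ℝ} (hk : 0 < k) :
    Real.sqrt (k/(1+k)) + Real.sqrt (1/(k*(1+k))) = Real.sqrt ((1+k)/k) := by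
  have hk1 : (0:ℝ) < 1 + k := by linarith
  have ha : (0:ℝ) ≤ k/(1+k) := by positivity
  have hb : (0:ℝ) ≤ 1/(k*(1+k)) := by positivity
  have hab : Real.sqrt (k/(1+k)) * Real.sqrt (1/(k*(1+k))) = 1/(1+k) := by
    rw [← Real.sqrt_mul ha]
    rw [show k/(1+k) * (1/(k*(1+k))) = (1/(1+k))^2 by field_simp]
    exact Real.sqrt_sq (by positivity)
  have hsum : (Real.sqrt (k/(1+k)) + Real.sqrt (1/(k*(1+k))))^2 = (1+k)/k := by
    rw [add_sq, Real.sq_sqrt ha, Real.sq_sqrt hb, mul_assoc, hab]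
    field_simp
    ring
  rw [← hsum, Real.sqrt_sq (by positivity)]

lemma m1_eq {k : ℝ} (hh0 : 0 < h) (hk : 0 < k) :
    ((2:ℝ)^(2/h)/(2*k))^(h/2) = 2*(1/(2*k))^(h/2) := by
  rw [Real.div_rpow (Real.rpow_nonneg (by norm_num) _) (by positivity : (0:ℝ) ≤ 2*k)]
  rw [← Real.rpow_mul (by norm_num : (0:ℝ) ≤ 2), show (2/h)*(h/2) = 1 by field_simp,
    Real.rpow_one]
  rw [Real.div_rpow (by norm_num : (0:ℝ) ≤ 1) (by positivity : (0:ℝ) ≤ 2*k), Real.one_rpow]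
  ring

lemma m2_lt {k : ℝ} (hh0 : 0 < h) (hk : 0 < k) :
    ((1+2*k)/(k*(1+k)))^(h/2) < ((1+k)/k)^(h/2) := by
  apply Real.rpow_lt_rpow (by positivity)
  · rw [div_lt_div_iff₀ (by positivity) (by positivity)]
    nlinarith [mul_pos (mul_pos hk hk) hk]
  · positivity

-- bound k*u^2 ≤ 1+k for u = b+c
lemma ku_sq {k b c d : ℝ} (hk : 0 < k) (hcon : b^2 + k*(c^2+d^2) ≤ 1) :
    k*(b+c)^2 ≤ 1+k := by
  nlinarith [sq_nonneg (b - k*c), mul_le_mul_of_nonneg_left hcon (by linarith : (0:ℝ) ≤ 1+k),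
    mul_nonneg (mul_nonneg (by linarith : (0:ℝ) ≤ 1+k) hk.le) (sq_nonneg d)]

lemma kv_sq {k b c d : ℝ} (hk : 0 < k) (hcon : b^2 + k*(c^2+d^2) ≤ 1) :
    k*(-b+d)^2 ≤ 1+k := by
  nlinarith [sq_nonneg (b + k*d), mul_le_mul_of_nonneg_left hcon (by linarith : (0:ℝ) ≤ 1+k),
    mul_nonneg (mul_nonneg (by linarith : (0:ℝ) ≤ 1+k) hk.le) (sq_nonneg c)]

lemma phi_le_gs {k z : ℝ} (hh1 : 1 < h) (hk : 0 < k) (hz2 : k*z^2 ≤ 1+k) :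
    phi h z ≤ ((1+k)/k)^(h/2) := by
  rcases le_or_gt z 0 with hz | hz
  · rw [phi_of_nonpos (by linarith) hz]
    positivity
  · rw [phi_of_nonneg hz.le, ← sq_rpow_half hz.le]
    apply Real.rpow_le_rpow (by positivity) _ (by positivity)
    rw [le_div_iff₀ hk]; linarith

lemma pointBound {k b c d : ℝ} (hh1 : 1 < h) (hh2 : h < 2) (hk : 0 < k)
    (hcon : b^2 + k*(c^2+d^2) ≤ 1) :
    phi h (b+c) + phi h (-b+d) ≤ max (2*(1/(2*k))^(h/2)) (((1+k)/k)^(h/2)) := by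
  have hh0 : (0:ℝ) < h := by linarith
  rcases le_or_gt (-b+d) 0 with hv | hv
  · rw [phi_of_nonpos hh0 hv]
    have := phi_le_gs (k := k) hh1 hk (ku_sq hk hcon)
    rw [add_zero]
    exact le_trans this (le_max_right _ _)
  · rcases le_or_gt (b+c) 0 with hu | hu
    · rw [phi_of_nonpos hh0 hu]
      have := phi_le_gs (k := k) hh1 hk (kv_sq hk hcon)
      rw [zero_add]
      exact le_trans this (le_max_right _ _)
    · rw [phi_of_nonneg hu.le, phi_of_nonneg hv.le]
      have hcon' : k*((b+c)^2+(-b+d)^2)*(1+2*k) - k^2*((b+c)-(-b+d))^2 ≤ 1+2*k := by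
        nlinarith [sq_nonneg ((1+2*k)*b - k*((b+c)-(-b+d))),
          mul_le_mul_of_nonneg_left hcon (by linarith : (0:ℝ) ≤ 1+2*k)]
      have hcore := core hh1 hh2 hk hu.le hv.le hcon'
      refine le_trans hcore ?_
      rcases le_total ((2:ℝ)^(2/h)/(2*k)) ((1+2*k)/(k*(1+k))) with hm | hm
      · rw [max_eq_right hm]
        exact le_trans (m2_lt hh0 hk).le (le_max_right _ _)
      · rw [max_eq_left hm, m1_eq hh0 hk]
        exact le_max_left _ _

lemma pointBoundStrict {k b c d : ℝ} (hh1 : 1 < h) (hh2 : h < 2) (hk : 0 < k)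
    (hcon : b^2 + k*(c^2+d^2) ≤ 1) (hu : 0 < b+c) (hv : 0 < -b+d)
    (hlt : 2*(1/(2*k))^(h/2) < ((1+k)/k)^(h/2)) :
    phi h (b+c) + phi h (-b+d) < ((1+k)/k)^(h/2) := by
  have hh0 : (0:ℝ) < h := by linarith
  rw [phi_of_nonneg hu.le, phi_of_nonneg hv.le]
  have hcon' : k*((b+c)^2+(-b+d)^2)*(1+2*k) - k^2*((b+c)-(-b+d))^2 ≤ 1+2*k := by
    nlinarith [sq_nonneg ((1+2*k)*b - k*((b+c)-(-b+d))),
      mul_le_mul_of_nonneg_left hcon (by linarith : (0:ℝ) ≤ 1+2*k)]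
  have hcore := core hh1 hh2 hk hu.le hv.le hcon'
  apply lt_of_le_of_lt hcore
  rcases le_total ((2:ℝ)^(2/h)/(2*k)) ((1+2*k)/(k*(1+k))) with hm | hm
  · rw [max_eq_right hm]
    exact m2_lt hh0 hk
  · rw [max_eq_left hm, m1_eq hh0 hk]
    exact hlt


lemma pointEq {k b c d : ℝ} (hh1 : 1 < h) (hh2 : h < 2) (hk : 0 < k)
    (hlt : 2*(1/(2*k))^(h/2) < ((1+k)/k)^(h/2))
    (hcon : b^2 + k*(c^2+d^2) ≤ 1) (hb : 0 ≤ b)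
    (heq : phi h (b+c) + phi h (-b+d) = ((1+k)/k)^(h/2)) :
    b = Real.sqrt (k/(1+k)) ∧ c = Real.sqrt (1/(k*(1+k))) ∧ d = 0 := by
  have hh0 : (0:ℝ) < h := by linarith
  have hk1 : (0:ℝ) < 1+k := by linarith
  have hgs : (0:ℝ) < ((1+k)/k)^(h/2) := Real.rpow_pos_of_pos (by positivity) _
  have hw0 : 0 < Real.sqrt ((1+k)/k) := Real.sqrt_pos.2 (by positivity)
  have hwsq : (Real.sqrt ((1+k)/k))^2 = (1+k)/k := Real.sq_sqrt (by positivity)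
  have hwh : (Real.sqrt ((1+k)/k))^h = ((1+k)/k)^(h/2) := by
    rw [← sq_rpow_half hw0.le, hwsq]
  rcases le_or_gt (-b+d) 0 with hv | hv
  · -- v ≤ 0 : equality case forces star point
    rw [phi_of_nonpos hh0 hv, add_zero] at heq
    have hu : 0 < b+c := by
      by_contra hc
      push_neg at hc
      rw [phi_of_nonpos hh0 hc] at heq
      linarith
    rw [phi_of_nonneg hu.le] at heq
    have hku := ku_sq hk hcon
    have huw : b+c ≤ Real.sqrt ((1+k)/k) := by
      have h1 : (b+c)^2 ≤ (Real.sqrt ((1+k)/k))^2 := by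
        rw [hwsq, le_div_iff₀ hk]; linarith
      nlinarith [hu, hw0]
    have huw' : b+c = Real.sqrt ((1+k)/k) := by
      rcases eq_or_lt_of_le huw with he | hlt2
      · exact he
      · exfalso
        have := Real.rpow_lt_rpow hu.le hlt2 hh0
        rw [hwh] at this
        linarith
    have hue : k*(b+c)^2 = 1+k := by
      have h2 : (b+c)^2 = (1+k)/k := by rw [huw', hwsq]
      rw [h2]
      field_simp
    have hsum0 : (b-k*c)^2 + (1+k)*(k*d^2) ≤ 0 := by
      nlinarith [hue, mul_le_mul_of_nonneg_left hcon hk1.le]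
    have hd0 : d = 0 := by
      have h6 : (1+k)*(k*d^2) ≤ 0 := by nlinarith [sq_nonneg (b-k*c)]
      have h7 : k*d^2 ≤ 0 := by
        by_contra hcc; push_neg at hcc
        nlinarith [mul_pos hk1 hcc]
      have h8 : d^2 ≤ 0 := by
        by_contra hcc; push_neg at hcc
        nlinarith [mul_pos hk hcc]
      exact sq_eq_zero_iff.mp (le_antisymm h8 (sq_nonneg d))
    have hbkc : b = k*c := by
      have hb2 : (b-k*c)^2 ≤ 0 := by
        nlinarith [mul_nonneg (mul_nonneg hk1.le hk.le) (sq_nonneg d)]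
      have := sq_eq_zero_iff.mp (le_antisymm hb2 (sq_nonneg (b-k*c)))
      linarith [this]
    have hc0 : 0 < c := by
      by_contra hcc; push_neg at hcc
      nlinarith [mul_nonneg hk.le (neg_nonneg.2 hcc)]
    have hck : (1+k)*(c^2*(k*(1+k))) = (1+k)*1 := by
      linear_combination hue + (-(k*(b + c + (1+k)*c)))*hbkc
    have hcsq : c^2 = 1/(k*(1+k)) := by
      have h3 : c^2*(k*(1+k)) = 1 := mul_left_cancel₀ (ne_of_gt hk1) hck
      rw [eq_div_iff (by positivity)]
      linarith [h3]
    have hbsq : b^2 = k/(1+k) := by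
      have h4 : b^2 = k^2*c^2 := by rw [hbkc]; ring
      rw [h4, hcsq]
      field_simp
    refine ⟨?_, ?_, hd0⟩
    · rw [← hbsq, Real.sqrt_sq hb]
    · rw [← hcsq, Real.sqrt_sq hc0.le]
  · rcases le_or_gt (b+c) 0 with hu | hu
    · -- u ≤ 0, v > 0 : contradiction with b ≥ 0
      exfalso
      rw [phi_of_nonpos hh0 hu, zero_add, phi_of_nonneg hv.le] at heq
      have hkv := kv_sq hk hcon
      have hvw : -b+d ≤ Real.sqrt ((1+k)/k) := by
        have h1 : (-b+d)^2 ≤ (Real.sqrt ((1+k)/k))^2 := by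
          rw [hwsq, le_div_iff₀ hk]; linarith
        nlinarith [hv, hw0]
      have hvw' : -b+d = Real.sqrt ((1+k)/k) := by
        rcases eq_or_lt_of_le hvw with he | hlt2
        · exact he
        · exfalso
          have := Real.rpow_lt_rpow hv.le hlt2 hh0
          rw [hwh] at this
          linarith
      have hve : k*(-b+d)^2 = 1+k := by
        have h2 : (-b+d)^2 = (1+k)/k := by rw [hvw', hwsq]
        rw [h2]
        field_simp
      have hsum0 : (b+k*d)^2 + (1+k)*(k*c^2) ≤ 0 := by
        nlinarith [hve, mul_le_mul_of_nonneg_left hcon hk1.le]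
      have hbkd : b + k*d = 0 := by
        have hb2 : (b+k*d)^2 ≤ 0 := by
          nlinarith [mul_nonneg (mul_nonneg hk1.le hk.le) (sq_nonneg c)]
        exact sq_eq_zero_iff.mp (le_antisymm hb2 (sq_nonneg (b+k*d)))
      have hd : 0 < d := by
        by_contra hdc
        push_neg at hdc
        have h5 : -b+d ≤ 0 := by nlinarith [mul_nonneg hk.le (neg_nonneg.2 hdc)]
        linarith [hvw', hw0]
      linarith [mul_pos hk hd, hbkd, hb]
    · -- u > 0, v > 0 : strict bound contradiction
      exfalso
      have := pointBoundStrict hh1 hh2 hk hcon hu hv hlt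
      linarith


end ST16

/-- **Structure of the optimum of the trivariate program (Opt 5).**
Let `F(b,c,d) = φ(b+c) + φ(-b+d)`, `γ₀ = 2φ(√(1/(2k)))` and
`γ⋆ = φ(√(k/(1+k)) + √(1/(k(1+k))))`.
(1) If `γ₀ < γ⋆`, then on `K = {b² + k(c²+d²) ≤ 1, b ≥ 0}` the supremum of `F`
is `γ⋆`, attained exactly at `(√(k/(1+k)), √(1/(k(1+k))), 0)`.
(2) If `γ⋆ < γ₀`, then on `{b² + k(c²+d²) ≤ 1}` the supremum of `F` is `γ₀`,
attained at the point `(0, √(1/(2k)), √(1/(2k)))` which has `b = 0`. -/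
theorem stmt16 (h : ℝ) (hh1 : 1 < h) (hh2 : h < 2) (k : ℝ) (hk : 0 < k)
    (γ0 γstar : ℝ)
    (hγ0 : γ0 = 2 * phi h (Real.sqrt (1 / (2 * k))))
    (hγstar : γstar = phi h (Real.sqrt (k / (1 + k)) + Real.sqrt (1 / (k * (1 + k))))) :
    (γ0 < γstar →
      (sSup ((fun p : ℝ × ℝ × ℝ => phi h (p.1 + p.2.1) + phi h (-p.1 + p.2.2)) ''
          {p : ℝ × ℝ × ℝ | p.1 ^ 2 + k * (p.2.1 ^ 2 + p.2.2 ^ 2) ≤ 1 ∧ 0 ≤ p.1}) =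
        γstar) ∧
      (Real.sqrt (k / (1 + k)) ^ 2 +
          k * (Real.sqrt (1 / (k * (1 + k))) ^ 2 + (0 : ℝ) ^ 2) ≤ 1) ∧
      (phi h (Real.sqrt (k / (1 + k)) + Real.sqrt (1 / (k * (1 + k)))) +
          phi h (-Real.sqrt (k / (1 + k)) + 0) = γstar) ∧
      (∀ p : ℝ × ℝ × ℝ,
        p.1 ^ 2 + k * (p.2.1 ^ 2 + p.2.2 ^ 2) ≤ 1 → 0 ≤ p.1 →
        phi h (p.1 + p.2.1) + phi h (-p.1 + p.2.2) = γstar →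
        p = (Real.sqrt (k / (1 + k)), Real.sqrt (1 / (k * (1 + k))), 0))) ∧
    (γstar < γ0 →
      (sSup ((fun p : ℝ × ℝ × ℝ => phi h (p.1 + p.2.1) + phi h (-p.1 + p.2.2)) ''
          {p : ℝ × ℝ × ℝ | p.1 ^ 2 + k * (p.2.1 ^ 2 + p.2.2 ^ 2) ≤ 1}) = γ0) ∧
      ((0 : ℝ) ^ 2 + k * (Real.sqrt (1 / (2 * k)) ^ 2 + Real.sqrt (1 / (2 * k)) ^ 2) ≤ 1) ∧
      (phi h ((0 : ℝ) + Real.sqrt (1 / (2 * k))) +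
          phi h (-(0 : ℝ) + Real.sqrt (1 / (2 * k))) = γ0)) := by
  have hh0 : (0:ℝ) < h := by linarith
  have hk1 : (0:ℝ) < 1+k := by linarith
  have hγ0' : γ0 = 2*(1/(2*k))^(h/2) := by
    rw [hγ0, ST16.phi_sqrt (by positivity)]
  have hγs' : γstar = ((1+k)/k)^(h/2) := by
    rw [hγstar, ST16.sqrt_sum_eq hk, ST16.phi_sqrt (by positivity)]
  constructor
  · intro hlt
    have hlt' : 2*(1/(2*k))^(h/2) < ((1+k)/k)^(h/2) := by
      rw [hγ0', hγs'] at hlt; exact hlt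
    have hfeas : (Real.sqrt (k/(1+k)))^2 + k*((Real.sqrt (1/(k*(1+k))))^2 + (0:ℝ)^2) ≤ 1 := by
      rw [Real.sq_sqrt (by positivity), Real.sq_sqrt (by positivity)]
      have : k/(1+k) + k*(1/(k*(1+k)) + (0:ℝ)^2) = 1 := by
        field_simp
        ring
      linarith [this]
    have hval : phi h (Real.sqrt (k/(1+k)) + Real.sqrt (1/(k*(1+k))))
        + phi h (-Real.sqrt (k/(1+k)) + 0) = γstar := by
      rw [ST16.phi_of_nonpos hh0 (by simp [Real.sqrt_nonneg] : -Real.sqrt (k/(1+k)) + (0:ℝ) ≤ 0),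
        add_zero, hγstar]
    refine ⟨?_, hfeas, hval, ?_⟩
    · apply IsGreatest.csSup_eq
      constructor
      · exact ⟨(Real.sqrt (k/(1+k)), Real.sqrt (1/(k*(1+k))), 0),
          ⟨by simpa using hfeas, Real.sqrt_nonneg _⟩, by simpa using hval⟩
      · rintro y ⟨p, ⟨hc, hb⟩, rfl⟩
        have hpb := ST16.pointBound (k := k) (b := p.1) (c := p.2.1) (d := p.2.2) hh1 hh2 hk hc
        rw [hγs']
        refine le_trans hpb ?_
        exact le_of_eq (max_eq_right hlt'.le)
    · rintro ⟨b, c, d⟩ hc hb heq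
      rw [hγs'] at heq
      obtain ⟨h1, h2, h3⟩ := ST16.pointEq hh1 hh2 hk hlt' hc hb heq
      simp only [Prod.mk.injEq]
      exact ⟨h1, h2, h3⟩
  · intro hlt
    have hlt' : ((1+k)/k)^(h/2) < 2*(1/(2*k))^(h/2) := by
      rw [hγ0', hγs'] at hlt; exact hlt
    have c0feas : (0:ℝ)^2 + k*((Real.sqrt (1/(2*k)))^2 + (Real.sqrt (1/(2*k)))^2) ≤ 1 := by
      rw [Real.sq_sqrt (by positivity)]
      have : (0:ℝ)^2 + k*(1/(2*k) + 1/(2*k)) = 1 := by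
        field_simp
        ring
      linarith [this]
    have c0val : phi h ((0:ℝ) + Real.sqrt (1/(2*k))) + phi h (-(0:ℝ) + Real.sqrt (1/(2*k))) = γ0 := by
      rw [zero_add, neg_zero, zero_add, hγ0]
      ring
    refine ⟨?_, c0feas, c0val⟩
    apply IsGreatest.csSup_eq
    constructor
    · exact ⟨((0:ℝ), Real.sqrt (1/(2*k)), Real.sqrt (1/(2*k))), by simpa using c0feas,
        by simpa using c0val⟩
    · rintro y ⟨p, hc, rfl⟩
      have hpb := ST16.pointBound (k := k) (b := p.1) (c := p.2.1) (d := p.2.2) hh1 hh2 hk hc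
      rw [hγ0']
      refine le_trans hpb ?_
      exact le_of_eq (max_eq_left hlt'.le)
end
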